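/- arXiv:2304.09676 — 5 statements merged into one kernel-verified Lean document; each statement's English description precedes it below -/
import Mathlib

section
/- Let n be a natural number and define the polynomial function G_n : ℂ → ℂ by G_n(x) = ∑_{k=0}^{n} ((2n-k)!/((n-k)! · k!)) x^k. Then the function h_n(x) = e^{-x} G_n(x) - G_n(-x) has vanishing derivatives at 0 up to order 2n, i.e., the k-th iterated derivative of h_n at x = 0 equals 0 for every k with 0 ≤ k ≤ 2n. (This is the defining property of the [n/n] Padé approximant G_n(-x)/G_n(x) of e^{-x}.) -/
open Complex

open Polynomial Finset in
private lemma pade_poly_key (n k : ℕ) (hk : k ≤ 2*n) :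
    ∑ j ∈ range (k+1), (-1:ℤ)^j * (k.choose j) * ((2*n-j).choose n) = (2*n-k).choose n := by
  have hpoly : ∑ j ∈ range (k+1),
      (Polynomial.C ((-1:ℤ)^j * (k.choose j))) * ((X+1)^(2*n-j) * X^j)
      = (X+1)^(2*n-k) := by
    have expand : ((-X : ℤ[X]) + (X+1))^k
        = ∑ j ∈ range (k+1), (-X : ℤ[X])^j * (X+1)^(k-j) * ((k.choose j : ℕ) : ℤ[X]) :=
      add_pow _ _ _
    have h1 : ((-X : ℤ[X]) + (X+1)) = 1 := by ring
    rw [h1, one_pow] at expand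
    calc ∑ j ∈ range (k+1),
        (Polynomial.C ((-1:ℤ)^j * (k.choose j))) * ((X+1)^(2*n-j) * X^j)
        = ∑ j ∈ range (k+1),
            ((-X : ℤ[X])^j * (X+1)^(k-j) * ((k.choose j : ℕ) : ℤ[X])) * (X+1)^(2*n-k) := by
          refine Finset.sum_congr rfl fun j hj => ?_
          rw [mem_range] at hj
          have h2 : 2*n-j = (k-j) + (2*n-k) := by omega
          rw [h2, pow_add]
          simp only [C_mul, C_pow, map_neg, map_one, Polynomial.C_eq_natCast]
          ring
      _ = (∑ j ∈ range (k+1), (-X : ℤ[X])^j * (X+1)^(k-j) * ((k.choose j : ℕ) : ℤ[X]))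
            * (X+1)^(2*n-k) := by rw [Finset.sum_mul]
      _ = (X+1)^(2*n-k) := by rw [← expand, one_mul]
  have hco := congrArg (fun p => Polynomial.coeff p n) hpoly
  simp only [finset_sum_coeff, coeff_X_add_one_pow] at hco
  rw [← hco]
  refine Finset.sum_congr rfl fun j hj => ?_
  rw [mem_range] at hj
  rw [coeff_C_mul, coeff_mul_X_pow']
  by_cases h : j ≤ n
  · rw [if_pos h, coeff_X_add_one_pow]
    have hsymm : (2*n-j).choose (n-j) = (2*n-j).choose n := by
      rw [← Nat.choose_symm (show n ≤ 2*n - j by omega)]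
      congr 1
      omega
    rw [hsymm]
  · rw [if_neg h, Nat.choose_eq_zero_of_lt (show 2*n-j < n by omega), mul_zero]
    simp

open Polynomial Finset in
private lemma pade_deriv_step (P Q : ℂ[X]) :
    deriv (fun x : ℂ => Complex.exp (-x) * P.eval x - Q.eval x)
      = fun x : ℂ => Complex.exp (-x) * (Polynomial.derivative P - P).eval x
          - (Polynomial.derivative Q).eval x := by
  funext x
  have h1 : HasDerivAt (fun x : ℂ => Complex.exp (-x)) (-Complex.exp (-x)) x := by
    simpa using (hasDerivAt_neg x).cexp
  have h2 := (h1.mul (P.hasDerivAt x)).sub (Q.hasDerivAt x)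
  rw [(show HasDerivAt (fun x : ℂ => Complex.exp (-x) * P.eval x - Q.eval x) _ x from h2).deriv]
  simp only [eval_sub]
  ring

open Polynomial Finset in
private lemma pade_iter (k : ℕ) : ∀ P Q : ℂ[X],
    iteratedDeriv k (fun x : ℂ => Complex.exp (-x) * P.eval x - Q.eval x)
      = fun x : ℂ =>
          Complex.exp (-x) * (((fun p : ℂ[X] => Polynomial.derivative p - p)^[k]) P).eval x
            - ((Polynomial.derivative (R := ℂ))^[k] Q).eval x := by
  induction k with
  | zero => intro P Q; simp
  | succ k ih =>
      intro P Q
      rw [iteratedDeriv_succ', pade_deriv_step, ih,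
        Function.iterate_succ_apply, Function.iterate_succ_apply]

open Polynomial Finset in
/-- The iterate of `p ↦ p' - p` as binomial sum. -/
private lemma pade_T_iter (k : ℕ) (P : ℂ[X]) :
    ((fun p : ℂ[X] => Polynomial.derivative p - p)^[k]) P
      = ∑ m ∈ range (k+1),
          ((-1:ℂ)^(k-m) * (k.choose m)) • ((Polynomial.derivative (R := ℂ))^[m] P) := by
  set D : Module.End ℂ ℂ[X] := Polynomial.derivative
  have hiter : ∀ (k : ℕ) (p : ℂ[X]),
      ((fun p : ℂ[X] => Polynomial.derivative p - p)^[k]) p = ((D - 1)^k) p := by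
    intro k
    induction k with
    | zero => intro p; simp
    | succ k ih =>
        intro p
        rw [Function.iterate_succ_apply, ih, pow_succ, Module.End.mul_apply]
        simp [D]
  rw [hiter]
  have hcomm : Commute D (-1 : Module.End ℂ ℂ[X]) := (Commute.one_right D).neg_right
  rw [sub_eq_add_neg, hcomm.add_pow]
  rw [LinearMap.sum_apply]
  refine Finset.sum_congr rfl fun m hm => ?_
  have hneg : ((-1 : Module.End ℂ ℂ[X])^(k-m)) = ((-1:ℂ)^(k-m)) • 1 := by
    rw [show (-1 : Module.End ℂ ℂ[X]) = (-1:ℂ) • 1 by ext p; simp, _root_.smul_pow, one_pow]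
  rw [Module.End.mul_apply, Module.End.mul_apply, hneg]
  simp only [Module.End.natCast_apply, LinearMap.smul_apply, Module.End.one_apply,
    map_smul, map_nsmul, Module.End.pow_apply]
  rw [smul_comm, mul_smul]
  simp [Nat.cast_smul_eq_nsmul ℂ]

/-- The (scaled) denominator polynomial of the `[n/n]` diagonal Padé approximant of
`e^{-x}`: `G_n(x) = ∑_{k=0}^{n} ((2n-k)!/((n-k)!·k!)) x^k = ((2n)!/n!)·₁F₁(-n;-2n;x)`. -/
noncomputable def padeG (n : ℕ) (x : ℂ) : ℂ :=
  ∑ k ∈ Finset.range (n + 1),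
    ((Nat.factorial (2 * n - k) : ℂ) /
      ((Nat.factorial (n - k) : ℂ) * (Nat.factorial k : ℂ))) * x ^ k

open Polynomial Finset in
/-- The function `h_n(x) = e^{-x} G_n(x) - G_n(-x)` has vanishing derivatives at `0` up to
order `2n`: this is the defining property of the `[n/n]` Padé approximant
`G_n(-x)/G_n(x)` of `e^{-x}`. -/
theorem iteratedDeriv_pade_defect_eq_zero (n : ℕ) :
    ∀ k : ℕ, k ≤ 2 * n →
      iteratedDeriv k (fun x : ℂ => Complex.exp (-x) * padeG n x - padeG n (-x)) 0 = 0 := by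
  intro k hk
  set a : ℕ → ℂ := fun j => (Nat.factorial (2 * n - j) : ℂ) /
      ((Nat.factorial (n - j) : ℂ) * (Nat.factorial j : ℂ)) with ha
  set P : ℂ[X] := ∑ j ∈ range (n+1), Polynomial.C (a j) * X^j with hP
  set Q : ℂ[X] := ∑ j ∈ range (n+1), Polynomial.C ((-1:ℂ)^j * a j) * X^j with hQ
  -- coefficients of P and Q
  have hPc : ∀ m : ℕ, P.coeff m = if m ≤ n then a m else 0 := by
    intro m
    simp [hP, finset_sum_coeff, coeff_C_mul, coeff_X_pow, Finset.sum_ite_eq',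
      Nat.lt_succ_iff]
  have hQc : ∀ m : ℕ, Q.coeff m = (-1:ℂ)^m * (if m ≤ n then a m else 0) := by
    intro m
    rw [hQ, finset_sum_coeff]
    simp only [coeff_C_mul, coeff_X_pow, mul_ite, mul_one, mul_zero, Finset.sum_ite_eq',
      Finset.mem_range, Nat.lt_succ_iff]
    by_cases h : m ≤ n <;> simp [h] <;> (intro h2; exact absurd h2 (by omega))
  -- factorial times coefficient
  have fact_mul : ∀ m : ℕ, m ≤ 2*n →
      (m.factorial : ℂ) * (if m ≤ n then a m else 0)
        = (n.factorial : ℂ) * ((2*n-m).choose n : ℕ) := by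
    intro m hm
    by_cases h : m ≤ n
    · rw [if_pos h]
      have h1 : (2*n-m).choose n * n.factorial * (n-m).factorial = (2*n-m).factorial := by
        have h0 := Nat.choose_mul_factorial_mul_factorial (show n ≤ 2*n-m by omega)
        rwa [show 2*n-m-n = n-m by omega] at h0
      have h2 : ((2*n-m).factorial : ℂ)
          = ((2*n-m).choose n : ℕ) * (n.factorial : ℂ) * ((n-m).factorial : ℂ) := by
        exact_mod_cast congrArg (fun t : ℕ => (t : ℂ)) h1.symm
      rw [ha]
      simp only
      rw [h2]
      have hn1 : ((n-m).factorial : ℂ) ≠ 0 := Nat.cast_ne_zero.2 (Nat.factorial_ne_zero _)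
      have hn2 : ((m).factorial : ℂ) ≠ 0 := Nat.cast_ne_zero.2 (Nat.factorial_ne_zero _)
      field_simp
    · rw [if_neg h, mul_zero, Nat.choose_eq_zero_of_lt (show 2*n-m < n by omega)]
      simp
  -- the key combinatorial identity, cast to ℂ
  have keyC : ∑ m ∈ range (k+1), (-1:ℂ)^m * (k.choose m : ℕ) * (((2*n-m).choose n : ℕ) : ℂ)
      = (((2*n-k).choose n : ℕ) : ℂ) := by
    have := pade_poly_key n k hk
    exact_mod_cast congrArg (fun z : ℤ => (z : ℂ)) this
  -- rewrite the function in polynomial form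
  have hfun : (fun x : ℂ => Complex.exp (-x) * padeG n x - padeG n (-x))
      = fun x : ℂ => Complex.exp (-x) * P.eval x - Q.eval x := by
    funext x
    have h1 : padeG n x = P.eval x := by
      simp [padeG, hP, eval_finset_sum, ha]
    have h2 : padeG n (-x) = Q.eval x := by
      simp only [padeG, hQ, eval_finset_sum, eval_mul, eval_pow, eval_C, eval_X]
      exact Finset.sum_congr rfl fun j _ => by rw [neg_pow]; ring
    rw [h1, h2]
  rw [hfun, pade_iter k P Q]
  simp only [neg_zero, Complex.exp_zero, one_mul]
  rw [pade_T_iter, ← Polynomial.coeff_zero_eq_eval_zero, ← Polynomial.coeff_zero_eq_eval_zero,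
    finset_sum_coeff]
  simp only [Polynomial.coeff_smul, Polynomial.coeff_iterate_derivative, zero_add,
    Nat.descFactorial_self, smul_eq_mul, nsmul_eq_mul]
  -- now a pure computation with coefficients
  have hsum : ∑ m ∈ range (k+1),
      ((-1:ℂ)^(k-m) * (k.choose m : ℕ)) * ((m.factorial : ℕ) * P.coeff m)
      = (-1:ℂ)^k * (n.factorial : ℂ) * (((2*n-k).choose n : ℕ) : ℂ) := by
    calc ∑ m ∈ range (k+1), ((-1:ℂ)^(k-m) * (k.choose m : ℕ)) * ((m.factorial : ℕ) * P.coeff m)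
        = ∑ m ∈ range (k+1), ((-1:ℂ)^k * (n.factorial : ℂ))
            * ((-1:ℂ)^m * (k.choose m : ℕ) * (((2*n-m).choose n : ℕ) : ℂ)) := by
          refine Finset.sum_congr rfl fun m hm => ?_
          rw [mem_range] at hm
          have hm2 : m ≤ 2*n := by omega
          have hsgn : (-1:ℂ)^(k-m) = (-1:ℂ)^k * (-1:ℂ)^m := by
            have e : (-1:ℂ)^(k-m) * (-1:ℂ)^m = (-1:ℂ)^k := by
              rw [← pow_add]; congr 1; omega
            have hm1 : ((-1:ℂ)^m) * ((-1:ℂ)^m) = 1 := by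
              rw [← pow_add]
              exact Even.neg_one_pow ⟨m, by ring⟩
            calc (-1:ℂ)^(k-m) = (-1:ℂ)^(k-m) * (((-1:ℂ)^m) * ((-1:ℂ)^m)) := by
                  rw [hm1, mul_one]
              _ = ((-1:ℂ)^(k-m) * (-1:ℂ)^m) * (-1:ℂ)^m := by ring
              _ = (-1:ℂ)^k * (-1:ℂ)^m := by rw [e]
          rw [hPc m, fact_mul m hm2, hsgn]
          ring
      _ = ((-1:ℂ)^k * (n.factorial : ℂ))
            * ∑ m ∈ range (k+1), (-1:ℂ)^m * (k.choose m : ℕ) * (((2*n-m).choose n : ℕ) : ℂ) := by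
          rw [← Finset.mul_sum]
      _ = (-1:ℂ)^k * (n.factorial : ℂ) * (((2*n-k).choose n : ℕ) : ℂ) := by rw [keyC]
  have hQk : (k.factorial : ℂ) * Q.coeff k
      = (-1:ℂ)^k * (n.factorial : ℂ) * (((2*n-k).choose n : ℕ) : ℂ) := by
    rw [hQc k]
    calc (k.factorial : ℂ) * ((-1:ℂ)^k * (if k ≤ n then a k else 0))
        = (-1:ℂ)^k * ((k.factorial : ℂ) * (if k ≤ n then a k else 0)) := by ring
      _ = (-1:ℂ)^k * ((n.factorial : ℂ) * (((2*n-k).choose n : ℕ) : ℂ)) := by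
          rw [fact_mul k hk]
      _ = _ := by ring
  rw [hsum, hQk]
  ring
end

section
/- Let n be a natural number and define G_n : ℂ → ℂ by G_n(x) = ∑_{k=0}^{n} ((2n-k)!/((n-k)! · k!)) x^k, and set h_n(x) = e^{-x} G_n(x) - G_n(-x). Then the (2n+1)-st iterated derivative of h_n at x = 0 equals (-1)^{n+1} · n!. (Equivalently, the Padé remainder S_n(x) = e^{-x} - G_n(-x)/G_n(x) satisfies S_n(x) = (-1)^{n+1} (n! n!/((2n)!(2n+1)!)) x^{2n+1} + O(x^{2n+2}).) -/
open Complex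

open Finset Polynomial

lemma keyIdentity (n : ℕ) : ∀ m : ℕ,
    ∑ k ∈ range (n+1), (-1:ℂ)^k * (n.choose k) / ((m:ℂ)+1+k) =
      (n.factorial : ℂ) / ∏ j ∈ range (n+1), ((m:ℂ)+1+j) := by
  induction n with
  | zero => intro m; simp
  | succ n ih =>
    intro m
    have hnz : ∀ (z : ℂ) (a b : ℕ), z = ((a:ℂ)+1+b) → z ≠ 0 := by
      rintro z a b rfl
      have : ((a:ℂ)+1+b) = ((a+1+b : ℕ) : ℂ) := by push_cast; ring
      rw [this]
      exact Nat.cast_ne_zero.2 (by omega)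
    have split : ∑ k ∈ range (n+2), (-1:ℂ)^k * ((n+1).choose k) / ((m:ℂ)+1+k)
        = (∑ k ∈ range (n+1), (-1:ℂ)^k * (n.choose k) / ((m:ℂ)+1+k))
          - ∑ k ∈ range (n+1), (-1:ℂ)^k * (n.choose k) / ((m:ℂ)+2+k) := by
      have e1 : ∀ k, k ∈ range (n+1) →
          (-1:ℂ)^(k+1) * ((n+1).choose (k+1)) / ((m:ℂ)+1+((k:ℕ)+1:ℕ))
          = ((-1:ℂ)^(k+1) * (n.choose (k+1)) / ((m:ℂ)+1+((k:ℕ)+1:ℕ))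
            - (-1:ℂ)^k * (n.choose k) / ((m:ℂ)+2+k)) := by
        intro k _
        rw [Nat.choose_succ_succ']
        push_cast
        rw [show ((m:ℂ)+1+((k:ℂ)+1)) = (m:ℂ)+2+k from by ring, pow_succ]
        ring
      have L : ∑ k ∈ range (n+2), (-1:ℂ)^k * ((n+1).choose k) / ((m:ℂ)+1+k)
          = (∑ k ∈ range (n+1),
              ((-1:ℂ)^(k+1) * (n.choose (k+1)) / ((m:ℂ)+1+((k:ℕ)+1:ℕ))
                - (-1:ℂ)^k * (n.choose k) / ((m:ℂ)+2+k)))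
            + 1 / ((m:ℂ)+1) := by
        rw [Finset.sum_range_succ' _ (n+1)]
        congr 1
        · exact Finset.sum_congr rfl e1
        · simp
      rw [L, Finset.sum_sub_distrib]
      have R : ∑ k ∈ range (n+1), (-1:ℂ)^k * (n.choose k) / ((m:ℂ)+1+k)
          = (∑ k ∈ range (n+1),
              (-1:ℂ)^(k+1) * (n.choose (k+1)) / ((m:ℂ)+1+((k:ℕ)+1:ℕ)))
            + 1 / ((m:ℂ)+1) := by
        have : ∑ k ∈ range (n+2), (-1:ℂ)^k * (n.choose k) / ((m:ℂ)+1+k)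
            = ∑ k ∈ range (n+1), (-1:ℂ)^k * (n.choose k) / ((m:ℂ)+1+k) := by
          rw [Finset.sum_range_succ]
          simp [Nat.choose_succ_self]
        rw [← this, Finset.sum_range_succ' _ (n+1)]
        simp
      rw [R]
      ring
    rw [split, ih m]
    have ihm1 := ih (m+1)
    have cast1 : ∀ k : ℕ, (((m+1:ℕ)):ℂ)+1+k = (m:ℂ)+2+k := by intro k; push_cast; ring
    simp only [cast1] at ihm1
    rw [ihm1]
    set a := ∏ j ∈ range (n+1), ((m:ℂ)+1+j) with hadef
    set b := ∏ j ∈ range (n+1), ((m:ℂ)+2+j) with hbdef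
    have ha : a ≠ 0 := Finset.prod_ne_zero_iff.2 (fun j _ => hnz _ m j rfl)
    have hb : b ≠ 0 := Finset.prod_ne_zero_iff.2 (fun j _ => by
      refine hnz _ (m+1) j ?_; push_cast; ring)
    have h1 : (m:ℂ)+1 ≠ 0 := hnz _ m 0 (by push_cast; ring)
    have h2 : (m:ℂ)+n+2 ≠ 0 := hnz _ m (n+1) (by push_cast; ring)
    have hP1 : ∏ j ∈ range (n+2), ((m:ℂ)+1+j) = a * ((m:ℂ)+n+2) := by
      rw [Finset.prod_range_succ]
      congr 1
      push_cast; ring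
    have hP2 : ∏ j ∈ range (n+2), ((m:ℂ)+1+j) = b * ((m:ℂ)+1) := by
      rw [Finset.prod_range_succ']
      congr 1
      · exact Finset.prod_congr rfl (fun j _ => by push_cast; ring)
      · norm_num
    have hrel : b = a * ((m:ℂ)+n+2) / ((m:ℂ)+1) := by
      rw [eq_div_iff h1, ← hP2, hP1]
    rw [hP1, hrel, Nat.factorial_succ]
    push_cast
    field_simp
    ring



noncomputable def padeP (n : ℕ) : Polynomial ℂ :=
  ∑ k ∈ range (n+1),
    Polynomial.C (((2*n-k).factorial : ℂ) / (((n-k).factorial : ℂ) * ((k).factorial : ℂ))) * X^k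

lemma padeG_eq (n : ℕ) (x : ℂ) : padeG n x = (padeP n).eval x := by
  simp [padeG, padeP, eval_finset_sum]

lemma padeP_coeff (n j : ℕ) : (padeP n).coeff j =
    if j ∈ range (n+1) then ((2*n-j).factorial : ℂ) / (((n-j).factorial : ℂ) * ((j).factorial : ℂ)) else 0 := by
  simp [padeP, finset_sum_coeff, coeff_C_mul, coeff_X_pow]

lemma polyContDiff (p : Polynomial ℂ) (N : ℕ) : ContDiff ℂ N (fun x : ℂ => p.eval x) := by
  have : (fun x : ℂ => p.eval x) = fun x => ∑ i ∈ range (p.natDegree + 1), p.coeff i * x ^ i := by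
    funext x; exact p.eval_eq_sum_range x
  rw [this]
  exact ContDiff.sum (fun i _ => contDiff_const.mul (contDiff_id.pow i))

lemma iteratedDeriv_sub' {N : ℕ} {f g : ℂ → ℂ} (hf : ContDiff ℂ N f) (hg : ContDiff ℂ N g) :
    iteratedDeriv N (fun x => f x - g x) 0 = iteratedDeriv N f 0 - iteratedDeriv N g 0 := by
  simp only [iteratedDeriv_eq_iteratedFDeriv]
  have h1 : (fun x => f x - g x) = (f + fun x => -g x) := by funext x; simp [sub_eq_add_neg]
  rw [h1, iteratedFDeriv_add_apply hf.contDiffAt hg.neg.contDiffAt]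
  have h2 : (fun x => -g x) = -g := rfl
  rw [h2, iteratedFDeriv_neg_apply]
  simp [sub_eq_add_neg]

lemma iteratedDeriv_poly (p : Polynomial ℂ) (N : ℕ) :
    iteratedDeriv N (fun x : ℂ => p.eval x) = fun x => (derivative^[N] p).eval x := by
  induction N generalizing p with
  | zero => simp
  | succ N ih =>
    have hd : (deriv fun x : ℂ => eval x p) = fun x => eval x (derivative p) := by
      funext x; exact Polynomial.deriv (p := p)
    rw [iteratedDeriv_succ', hd, ih, Function.iterate_succ_apply]

lemma iteratedDeriv_exp_mul_poly (N : ℕ) : ∀ p : Polynomial ℂ,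
    iteratedDeriv N (fun x : ℂ => Complex.exp (-x) * p.eval x)
      = fun x => Complex.exp (-x) * ((fun q : Polynomial ℂ => derivative q - q)^[N] p).eval x := by
  induction N with
  | zero => intro p; simp
  | succ N ih =>
    intro p
    rw [iteratedDeriv_succ, ih p]
    funext x
    have hexp : HasDerivAt (fun y : ℂ => Complex.exp (-y)) (-Complex.exp (-x)) x := by
      have h := (Complex.hasDerivAt_exp (-x)).comp x (hasDerivAt_neg x)
      simpa [Function.comp_def] using h
    set q := (fun q : Polynomial ℂ => derivative q - q)^[N] p with hq
    have h2 : HasDerivAt (fun y : ℂ => Complex.exp (-y) * q.eval y)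
        (-Complex.exp (-x) * q.eval x + Complex.exp (-x) * q.derivative.eval x) x :=
      hexp.mul (q.hasDerivAt x)
    rw [h2.deriv, Function.iterate_succ_apply']
    simp only [eval_sub]
    ring

lemma iterate_T_eq_pow (N : ℕ) (p : Polynomial ℂ) :
    (fun q : Polynomial ℂ => derivative q - q)^[N] p
      = ((derivative - 1 : Module.End ℂ (Polynomial ℂ))^N) p := by
  induction N with
  | zero => simp
  | succ N ih =>
    rw [Function.iterate_succ_apply', ih, pow_succ', Module.End.mul_apply]
    simp [LinearMap.sub_apply]

lemma neg_one_pow_apply (k : ℕ) (q : Polynomial ℂ) :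
    (((-1 : Module.End ℂ (Polynomial ℂ)))^k) q = (-1 : ℂ)^k • q := by
  induction k with
  | zero => simp
  | succ k ih => rw [pow_succ, Module.End.mul_apply, pow_succ]; simp [ih, smul_smul]

lemma pow_sub_one_expand (N : ℕ) (p : Polynomial ℂ) :
    ((derivative - 1 : Module.End ℂ (Polynomial ℂ))^N) p
      = ∑ j ∈ range (N+1), (N.choose j) • ((-1 : ℂ)^(N-j) • (derivative^[j] p)) := by
  have hc : Commute (derivative : Module.End ℂ (Polynomial ℂ)) (-1) :=
    (Commute.one_right (derivative : Module.End ℂ (Polynomial ℂ))).neg_right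
  rw [sub_eq_add_neg, hc.add_pow]
  rw [LinearMap.sum_apply]
  refine Finset.sum_congr rfl (fun j hj => ?_)
  rw [Module.End.mul_apply, Module.End.mul_apply, Module.End.natCast_apply, neg_one_pow_apply]
  simp only [map_smul, map_nsmul, Module.End.pow_apply]
  rw [smul_comm]

lemma fact_prod (m : ℕ) : ∀ k : ℕ, m.factorial * ∏ j ∈ range k, (m+1+j) = (m+k).factorial := by
  intro k
  induction k with
  | zero => simp
  | succ k ih =>
    rw [Finset.prod_range_succ, ← mul_assoc, ih, show m+(k+1) = (m+k)+1 by omega,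
      Nat.factorial_succ, show m+1+k = (m+k)+1 by omega]
    ring

lemma cast_fact_ne (m : ℕ) : ((m.factorial : ℂ)) ≠ 0 :=
  Nat.cast_ne_zero.2 m.factorial_ne_zero

lemma term_eq (n k : ℕ) (hk : k ≤ n) :
    ((2*n+1).choose (n-k) : ℂ) * ((-1:ℂ)^(2*n+1-(n-k)) * (((n-k).factorial : ℂ) *
      (((2*n-(n-k)).factorial : ℂ) / (((n-(n-k)).factorial : ℂ) * (((n-k)).factorial : ℂ)))))
    = ((-1:ℂ)^(n+1) * (((2*n+1).factorial : ℂ) / (n.factorial : ℂ)))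
      * ((-1:ℂ)^k * (n.choose k : ℂ) / ((n:ℂ)+1+k)) := by
  have h1 : 2*n-(n-k) = n+k := by omega
  have h2 : n-(n-k) = k := by omega
  have h3 : 2*n+1-(n-k) = n+1+k := by omega
  rw [h1, h2, h3]
  have hch1 : ((2*n+1).choose (n-k) : ℂ) * ((n-k).factorial : ℂ) * ((n+1+k).factorial : ℂ)
      = ((2*n+1).factorial : ℂ) := by
    have := Nat.choose_mul_factorial_mul_factorial (show n-k ≤ 2*n+1 by omega)
    rw [h3] at this
    exact_mod_cast this
  have hch2 : ((n.choose k : ℂ)) * (k.factorial : ℂ) * ((n-k).factorial : ℂ)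
      = (n.factorial : ℂ) := by
    exact_mod_cast Nat.choose_mul_factorial_mul_factorial hk
  have hfs : ((n+1+k).factorial : ℂ) = ((n:ℂ)+1+k) * ((n+k).factorial : ℂ) := by
    rw [show n+1+k = (n+k)+1 by omega, Nat.factorial_succ]
    push_cast; ring
  have hnk : ((n:ℂ)+1+k) ≠ 0 := by
    have : ((n:ℂ)+1+k) = ((n+1+k : ℕ) : ℂ) := by push_cast; ring
    rw [this]; exact Nat.cast_ne_zero.2 (by omega)
  have hC1 : ((2*n+1).choose (n-k) : ℂ)
      = ((2*n+1).factorial : ℂ) / (((n-k).factorial : ℂ) * ((n+1+k).factorial : ℂ)) := by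
    rw [eq_div_iff (mul_ne_zero (cast_fact_ne _) (cast_fact_ne _)), ← mul_assoc]
    exact hch1
  have hC2 : ((n.choose k : ℂ))
      = (n.factorial : ℂ) / ((k.factorial : ℂ) * (((n-k)).factorial : ℂ)) := by
    rw [eq_div_iff (mul_ne_zero (cast_fact_ne _) (cast_fact_ne _)), ← mul_assoc]
    exact hch2
  rw [hC1, hC2, hfs, pow_add, pow_add]
  have f1 := cast_fact_ne (n-k)
  have f2 := cast_fact_ne (n+k)
  have f3 := cast_fact_ne k
  have f4 := cast_fact_ne n
  field_simp

/-- The `(2n+1)`-st iterated derivative of `h_n(x) = e^{-x} G_n(x) - G_n(-x)` at `x = 0`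
equals `(-1)^{n+1} · n!`.  Equivalently, the Padé remainder
`S_n(x) = e^{-x} - G_n(-x)/G_n(x)` satisfies
`S_n(x) = (-1)^{n+1}(n! n!/((2n)!(2n+1)!)) x^{2n+1} + O(x^{2n+2})`. -/
theorem iteratedDeriv_pade_defect_leading_coeff (n : ℕ) :
    iteratedDeriv (2 * n + 1)
      (fun x : ℂ => Complex.exp (-x) * padeG n x - padeG n (-x)) 0 =
      (-1) ^ (n + 1) * (Nat.factorial n : ℂ) := by
  have hfun : (fun x : ℂ => Complex.exp (-x) * padeG n x - padeG n (-x))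
      = fun x : ℂ => (Complex.exp (-x) * (padeP n).eval x) - (padeP n).eval (-x) := by
    funext x; rw [padeG_eq, padeG_eq]
  rw [hfun]
  have hf : ContDiff ℂ (2*n+1 : ℕ) (fun x : ℂ => Complex.exp (-x) * (padeP n).eval x) :=
    (Complex.contDiff_exp.comp contDiff_neg).mul (polyContDiff _ _)
  have hg : ContDiff ℂ (2*n+1 : ℕ) (fun x : ℂ => (padeP n).eval (-x)) :=
    (polyContDiff (padeP n) (2*n+1)).comp contDiff_neg
  rw [iteratedDeriv_sub' hf hg]
  -- the G(-x) part vanishes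
  have hgzero : iteratedDeriv (2*n+1) (fun x : ℂ => (padeP n).eval (-x)) 0 = 0 := by
    have := iteratedDeriv_comp_neg (2*n+1) (fun x : ℂ => (padeP n).eval x) 0
    simp only [neg_zero] at this
    rw [this, iteratedDeriv_poly]
    have h0 : (derivative^[2*n+1] (padeP n)).eval 0 = 0 := by
      rw [← coeff_zero_eq_eval_zero, Polynomial.coeff_iterate_derivative]
      have : (padeP n).coeff (0 + (2*n+1)) = 0 := by
        rw [padeP_coeff, if_neg]
        simp only [Finset.mem_range]; omega
      rw [this, smul_zero]
    show (-1:ℂ)^(2*n+1) • ((derivative^[2*n+1] (padeP n)).eval 0) = 0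
    rw [h0, smul_zero]
  rw [hgzero, sub_zero]
  -- main term
  rw [show iteratedDeriv (2*n+1) (fun x : ℂ => Complex.exp (-x) * (padeP n).eval x)
      = fun x => Complex.exp (-x) *
        ((fun q : Polynomial ℂ => derivative q - q)^[2*n+1] (padeP n)).eval x
      from iteratedDeriv_exp_mul_poly _ _]
  rw [iterate_T_eq_pow, pow_sub_one_expand]
  simp only [neg_zero, Complex.exp_zero, one_mul, eval_finset_sum, eval_smul]
  have hterm : ∀ j ∈ range (2*n+2),
      ((2*n+1).choose j) • (((-1:ℂ)^(2*n+1-j)) • (derivative^[j] (padeP n)).eval 0)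
      = ((2*n+1).choose j : ℂ) * ((-1:ℂ)^(2*n+1-j) * ((j.factorial : ℂ) * (padeP n).coeff j)) := by
    intro j _
    rw [← coeff_zero_eq_eval_zero, Polynomial.coeff_iterate_derivative, zero_add,
      Nat.descFactorial_self]
    simp [smul_smul, nsmul_eq_mul]
  rw [Finset.sum_congr rfl hterm]
  -- shrink the sum to range (n+1)
  have hshrink : ∑ j ∈ range (2*n+2),
        ((2*n+1).choose j : ℂ) * ((-1:ℂ)^(2*n+1-j) * ((j.factorial : ℂ) * (padeP n).coeff j))
      = ∑ j ∈ range (n+1),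
        ((2*n+1).choose j : ℂ) * ((-1:ℂ)^(2*n+1-j) * ((j.factorial : ℂ) * (padeP n).coeff j)) := by
    refine (Finset.sum_subset (Finset.range_subset_range.2 (by omega)) ?_).symm
    intro j hj hj'
    have : (padeP n).coeff j = 0 := by rw [padeP_coeff, if_neg hj']
    rw [this]
    ring
  rw [hshrink]
  -- reflect the sum
  rw [← Finset.sum_range_reflect]
  have hrefl : ∀ k ∈ range (n+1),
      ((2*n+1).choose (n+1-1-k) : ℂ) *
        ((-1:ℂ)^(2*n+1-(n+1-1-k)) * (((n+1-1-k).factorial : ℂ) * (padeP n).coeff (n+1-1-k)))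
      = ((-1:ℂ)^(n+1) * (((2*n+1).factorial : ℂ) / (n.factorial : ℂ)))
          * ((-1:ℂ)^k * (n.choose k : ℂ) / ((n:ℂ)+1+k)) := by
    intro k hk
    have hk' : k ≤ n := by simpa [Nat.lt_succ_iff] using Finset.mem_range.1 hk
    have hnk : n+1-1-k = n-k := by omega
    rw [hnk, padeP_coeff, if_pos (Finset.mem_range.2 (by omega))]
    exact term_eq n k hk'
  rw [Finset.sum_congr rfl hrefl, ← Finset.mul_sum, keyIdentity n n]
  -- compute the product
  have hprod : (∏ j ∈ range (n+1), ((n:ℂ)+1+j)) = ((2*n+1).factorial : ℂ) / (n.factorial : ℂ) := by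
    rw [eq_div_iff (cast_fact_ne n)]
    have := fact_prod n (n+1)
    rw [show n+(n+1) = 2*n+1 by omega] at this
    calc (∏ j ∈ range (n+1), ((n:ℂ)+1+j)) * (n.factorial : ℂ)
        = ((n.factorial * ∏ j ∈ range (n+1), (n+1+j) : ℕ) : ℂ) := by push_cast; ring
      _ = ((2*n+1).factorial : ℂ) := by rw [this]
  rw [hprod]
  have h1 := cast_fact_ne n
  have h2 := cast_fact_ne (2*n+1)
  field_simp
end

section
/- Let n ≥ 1 be a natural number, define G_n : ℂ → ℂ by G_n(x) = ∑_{k=0}^{n} ((2n-k)!/((n-k)! · k!)) x^k, and define the rational approximation E_n(z) = -(1/(2iz)) · (G_n(-iz)² - G_n(iz)²)/(G_n(iz) · G_n(-iz)) for z ≠ 0. Then the approximation error Ŝ_n(z) = sinc z - E_n(z) satisfies lim_{z→0, z≠0} Ŝ_n(z)/z^{2n} = (n!)²/((2n)!(2n+1)!); in particular the error vanishes to order 2n at z = 0. -/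
open Complex Filter

/-- The unnormalized sinc function on the complex plane. -/
noncomputable def csinc (z : ℂ) : ℂ := if z = 0 then 1 else Complex.sin z / z

/-- The rational approximation `E_n` of the sinc function obtained by substituting the
`[n/n]` Padé approximant of the exponential into `sinc z = (e^{-iz} - e^{iz})/(-2iz)`. -/
noncomputable def sincPadeE (n : ℕ) (z : ℂ) : ℂ :=
  -(1 / (2 * I * z)) *
    ((padeG n (-I * z)) ^ 2 - (padeG n (I * z)) ^ 2) / (padeG n (I * z) * padeG n (-I * z))

section SincPadeAux
open Polynomial Finset

lemma master_poly (n j : ℕ) (hj : j ≤ 2*n) :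
    (∑ k ∈ range (j+1), (C ((-1)^k * (j.choose k : ℤ))) * (X+1)^(2*n-k))
      = X^j * (X+1)^(2*n-j) := by
  have h1 : ∀ k ∈ range (j+1),
      (C ((-1)^k * (j.choose k : ℤ))) * (X+1)^(2*n-k)
        = ((-1 : ℤ[X])^k * (X+1)^(j-k) * (j.choose k : ℤ[X])) * (X+1)^(2*n-j) := by
    intro k hk
    rw [mem_range] at hk
    have : 2*n - k = (j - k) + (2*n - j) := by omega
    rw [this, pow_add]
    simp only [map_mul, map_pow, map_neg, map_one, map_natCast]
    ring
  rw [Finset.sum_congr rfl h1, ← Finset.sum_mul, ← add_pow]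
  norm_num

lemma lemA (n j : ℕ) (hj : j ≤ 2*n) :
    (∑ k ∈ range (n+1), (-1:ℤ)^k * (j.choose k) * ((2*n-k).choose n))
      = if j ≤ n then ((2*n-j).choose (n-j) : ℤ) else 0 := by
  have key : (∑ k ∈ range (j+1), (C ((-1)^k * (j.choose k : ℤ))) * (X+1)^(2*n-k)).coeff n
      = ((X^j * (X+1)^(2*n-j) : ℤ[X])).coeff n := by rw [master_poly n j hj]
  rw [(Polynomial.commute_X_pow _ j).eq, Polynomial.coeff_mul_X_pow'] at key
  simp only [Polynomial.finset_sum_coeff, Polynomial.coeff_C_mul,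
    Polynomial.coeff_X_add_one_pow] at key
  have key2 : (∑ k ∈ range (j+1), (-1:ℤ)^k * (j.choose k) * ((2*n-k).choose n))
      = if j ≤ n then ((2*n-j).choose (n-j) : ℤ) else 0 := by
    rw [← key]
  rw [← key2]
  rcases le_or_gt j n with h | h
  · rw [eq_comm]
    apply Finset.sum_subset
    · intro x hx; simp only [mem_range] at *; omega
    · intro x hx hx'
      simp only [mem_range] at hx hx'
      have : j < x := by omega
      rw [Nat.choose_eq_zero_of_lt this]
      push_cast; ring
  · apply Finset.sum_subset
    · intro x hx; simp only [mem_range] at *; omega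
    · intro x hx hx'
      simp only [mem_range] at hx hx'
      have : 2*n - x < n := by omega
      rw [Nat.choose_eq_zero_of_lt this]
      push_cast; ring

lemma lemB (n : ℕ) (hn : 1 ≤ n) :
    (∑ k ∈ range (n+1), (-1:ℤ)^k * ((2*n+1).choose k) * ((2*n-k).choose n))
      = (-1:ℤ)^n := by
  have hext : (∑ k ∈ range (n+1), (-1:ℤ)^k * ((2*n+1).choose k) * ((2*n-k).choose n))
      = ∑ k ∈ range (2*n+1), (-1:ℤ)^k * ((2*n+1).choose k) * ((2*n-k).choose n) := by
    apply Finset.sum_subset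
    · intro x hx; simp only [mem_range] at *; omega
    · intro x hx hx'
      simp only [mem_range] at hx hx'
      have : 2*n - x < n := by omega
      rw [Nat.choose_eq_zero_of_lt this]; push_cast; ring
  rw [hext]
  set P : ℤ[X] := ∑ k ∈ range (2*n+1), (C ((-1)^k * ((2*n+1).choose k : ℤ))) * (X+1)^(2*n-k) with hP
  set A : ℤ[X] := ∑ i ∈ range (2*n+1), (-X)^i with hA
  have hXP : (X+1) * P = X^(2*n+1) + 1 := by
    rw [hP, Finset.mul_sum]
    have h1 : ∀ k ∈ range (2*n+1),
        (X+1) * ((C ((-1)^k * ((2*n+1).choose k : ℤ))) * (X+1)^(2*n-k))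
          = (-1 : ℤ[X])^k * (X+1)^(2*n+1-k) * ((2*n+1).choose k : ℤ[X]) := by
      intro k hk
      rw [mem_range] at hk
      have : 2*n+1-k = (2*n-k)+1 := by omega
      rw [this, pow_succ]
      simp only [map_mul, map_pow, map_neg, map_one, map_natCast]
      ring
    rw [Finset.sum_congr rfl h1]
    have hfull := add_pow (-1 : ℤ[X]) (X+1) (2*n+1)
    rw [Finset.sum_range_succ] at hfull
    have hx : (-1 : ℤ[X]) + (X+1) = X := by ring
    rw [hx] at hfull
    have hlast : (-1 : ℤ[X])^(2*n+1) * (X+1)^(2*n+1-(2*n+1)) * ((2*n+1).choose (2*n+1) : ℤ[X]) = -1 := by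
      rw [Nat.sub_self, pow_zero, Nat.choose_self]
      have : Odd (2*n+1) := ⟨n, by ring⟩
      rw [this.neg_one_pow]
      norm_num
    rw [hlast] at hfull
    linear_combination -hfull
  have hXA : (X+1) * A = X^(2*n+1) + 1 := by
    have hg := geom_sum_mul (-X : ℤ[X]) (2*n+1)
    have hodd : Odd (2*n+1) := ⟨n, by ring⟩
    rw [hodd.neg_pow] at hg
    rw [hA]
    linear_combination -hg
  have hPA : P = A := by
    have hne : (X + 1 : ℤ[X]) ≠ 0 := by
      intro h
      have := congrArg (fun p => Polynomial.coeff p 0) h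
      simp at this
    exact mul_left_cancel₀ hne (by rw [hXP, hXA])
  have hcoeff : P.coeff n = A.coeff n := by rw [hPA]
  rw [hP, hA] at hcoeff
  simp only [Polynomial.finset_sum_coeff, Polynomial.coeff_C_mul,
    Polynomial.coeff_X_add_one_pow] at hcoeff
  have hrhs : ∑ b ∈ range (2*n+1), ((-X : ℤ[X])^b).coeff n = (-1:ℤ)^n := by
    have h1 : ∀ b ∈ range (2*n+1), ((-X : ℤ[X])^b).coeff n
        = if b = n then (-1:ℤ)^n else 0 := by
      intro b _
      rw [neg_pow, show ((-1 : ℤ[X])^b) = C ((-1:ℤ)^b) by simp,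
        Polynomial.coeff_C_mul, Polynomial.coeff_X_pow]
      by_cases h : b = n
      · simp [h]
      · simp [h, show ¬ n = b from fun hh => h hh.symm]
    rw [Finset.sum_congr rfl h1, Finset.sum_ite_eq' (range (2*n+1)) n fun _ => (-1:ℤ)^n]
    simp only [mem_range, if_pos (by omega : n < 2*n+1)]
  rw [hcoeff, hrhs]

lemma term_conv (n j k : ℕ) (hk : k ≤ n) (hkj : k ≤ j) :
    (-1:ℂ)^k * (((2*n-k).factorial : ℂ) / (((n-k).factorial : ℂ) * (k.factorial : ℂ)))
        / ((j-k).factorial : ℂ)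
      = ((n.factorial : ℂ) / (j.factorial : ℂ)) *
        ((((-1:ℤ)^k * (j.choose k) * ((2*n-k).choose n) : ℤ) : ℂ)) := by
  have e1 : ((j.choose k : ℂ)) * (k.factorial : ℂ) * ((j-k).factorial : ℂ)
      = (j.factorial : ℂ) := by
    exact_mod_cast congrArg (Nat.cast : ℕ → ℂ) (Nat.choose_mul_factorial_mul_factorial hkj)
  have h2 : n ≤ 2*n - k := by omega
  have e2' := Nat.choose_mul_factorial_mul_factorial h2
  have hnk : 2*n - k - n = n - k := by omega
  rw [hnk] at e2'
  have e2 : (((2*n-k).choose n : ℂ)) * (n.factorial : ℂ) * ((n-k).factorial : ℂ)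
      = ((2*n-k).factorial : ℂ) := by exact_mod_cast congrArg (Nat.cast : ℕ → ℂ) e2'
  push_cast
  rw [← e2, ← e1]
  have h1 : (k.factorial : ℂ) ≠ 0 := Nat.cast_ne_zero.2 (Nat.factorial_ne_zero k)
  have h3 : ((j-k).factorial : ℂ) ≠ 0 := Nat.cast_ne_zero.2 (Nat.factorial_ne_zero _)
  have h4 : ((n-k).factorial : ℂ) ≠ 0 := Nat.cast_ne_zero.2 (Nat.factorial_ne_zero _)
  have h6 : (n.factorial : ℂ) ≠ 0 := Nat.cast_ne_zero.2 (Nat.factorial_ne_zero _)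
  have h5 : (j.choose k : ℂ) ≠ 0 := Nat.cast_ne_zero.2 (Nat.choose_pos hkj).ne'
  field_simp

lemma innerSum (n j : ℕ) (hj : j ≤ 2*n) :
    (∑ k ∈ range (n+1), (if k ≤ j then
        ((2*n-k).factorial : ℂ) / (((n-k).factorial : ℂ) * (k.factorial : ℂ))
          * (-1:ℂ)^k / ((j-k).factorial : ℂ) else 0))
      = if j ≤ n then ((2*n-j).factorial : ℂ) / (((n-j).factorial : ℂ) * (j.factorial : ℂ))
        else 0 := by
  have hterm : ∀ k ∈ range (n+1),
      (if k ≤ j then ((2*n-k).factorial : ℂ) / (((n-k).factorial : ℂ) * (k.factorial : ℂ))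
          * (-1:ℂ)^k / ((j-k).factorial : ℂ) else 0)
        = ((n.factorial : ℂ) / (j.factorial : ℂ)) *
          ((((-1:ℤ)^k * (j.choose k) * ((2*n-k).choose n) : ℤ) : ℂ)) := by
    intro k hk
    rw [mem_range] at hk
    by_cases hkj : k ≤ j
    · rw [if_pos hkj, ← term_conv n j k (by omega) hkj]
      ring
    · rw [if_neg hkj, Nat.choose_eq_zero_of_lt (by omega)]
      push_cast
      ring
  rw [Finset.sum_congr rfl hterm, ← Finset.mul_sum, ← Int.cast_sum, lemA n j hj]
  rcases le_or_gt j n with h | h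
  · rw [if_pos h, if_pos h]
    have e3' := Nat.choose_mul_factorial_mul_factorial (show n - j ≤ 2*n - j by omega)
    have h5 : 2*n - j - (n-j) = n := by omega
    rw [h5] at e3'
    have e3 : (((2*n-j).choose (n-j) : ℂ)) * ((n-j).factorial : ℂ) * (n.factorial : ℂ)
        = ((2*n-j).factorial : ℂ) := by exact_mod_cast congrArg (Nat.cast : ℕ → ℂ) e3'
    push_cast
    rw [← e3]
    have h1 : ((n-j).factorial : ℂ) ≠ 0 := Nat.cast_ne_zero.2 (Nat.factorial_ne_zero _)
    have h6 : (n.factorial : ℂ) ≠ 0 := Nat.cast_ne_zero.2 (Nat.factorial_ne_zero _)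
    have h7 : (j.factorial : ℂ) ≠ 0 := Nat.cast_ne_zero.2 (Nat.factorial_ne_zero _)
    field_simp
  · rw [if_neg (by omega), if_neg (by omega)]
    simp

lemma Lval (n : ℕ) (hn : 1 ≤ n) :
    (∑ k ∈ range (n+1),
        ((2*n-k).factorial : ℂ) / (((n-k).factorial : ℂ) * (k.factorial : ℂ))
          * (-1:ℂ)^k / (((2*n+1-k).factorial : ℂ)))
      = (-1:ℂ)^n * (n.factorial : ℂ) / ((2*n+1).factorial : ℂ) := by
  have hterm : ∀ k ∈ range (n+1),
      ((2*n-k).factorial : ℂ) / (((n-k).factorial : ℂ) * (k.factorial : ℂ))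
          * (-1:ℂ)^k / (((2*n+1-k).factorial : ℂ))
        = ((n.factorial : ℂ) / ((2*n+1).factorial : ℂ)) *
          ((((-1:ℤ)^k * ((2*n+1).choose k) * ((2*n-k).choose n) : ℤ) : ℂ)) := by
    intro k hk
    rw [mem_range] at hk
    rw [← term_conv n (2*n+1) k (by omega) (by omega)]
    ring
  rw [Finset.sum_congr rfl hterm, ← Finset.mul_sum, ← Int.cast_sum, lemB n hn]
  push_cast
  ring

lemma Qeq (n : ℕ) (w : ℂ) :
    (∑ k ∈ range (n+1),
      ((2*n-k).factorial : ℂ) / (((n-k).factorial : ℂ) * (k.factorial : ℂ)) * (-1:ℂ)^k * w^k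
        * (∑ m ∈ range (2*n+1-k), w^m / (m.factorial : ℂ)))
      = padeG n w := by
  have h1 : ∀ k ∈ range (n+1),
      ((2*n-k).factorial : ℂ) / (((n-k).factorial : ℂ) * (k.factorial : ℂ)) * (-1:ℂ)^k * w^k
        * (∑ m ∈ range (2*n+1-k), w^m / (m.factorial : ℂ))
      = ∑ j ∈ range (2*n+1), (if k ≤ j then
          ((2*n-k).factorial : ℂ) / (((n-k).factorial : ℂ) * (k.factorial : ℂ))
            * (-1:ℂ)^k / ((j-k).factorial : ℂ) else 0) * w^j := by
    intro k hk
    rw [mem_range] at hk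
    have hsub : Finset.Ico k (2*n+1) ⊆ range (2*n+1) := by
      intro x hx; simp only [Finset.mem_Ico, mem_range] at *; omega
    rw [← Finset.sum_subset hsub (by
      intro x hx hx'
      simp only [Finset.mem_Ico, mem_range] at hx hx'
      rw [if_neg (by omega), zero_mul])]
    rw [Finset.sum_Ico_eq_sum_range]
    rw [Finset.mul_sum]
    apply Finset.sum_congr rfl
    intro m hm
    rw [if_pos (by omega)]
    have : k + m - k = m := by omega
    rw [this, pow_add]
    ring
  rw [Finset.sum_congr rfl h1, Finset.sum_comm]
  have h2 : ∀ j ∈ range (2*n+1),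
      (∑ k ∈ range (n+1), (if k ≤ j then
          ((2*n-k).factorial : ℂ) / (((n-k).factorial : ℂ) * (k.factorial : ℂ))
            * (-1:ℂ)^k / ((j-k).factorial : ℂ) else 0) * w^j)
      = (if j ≤ n then ((2*n-j).factorial : ℂ) / (((n-j).factorial : ℂ) * (j.factorial : ℂ))
          else 0) * w^j := by
    intro j hj
    rw [mem_range] at hj
    rw [← Finset.sum_mul, innerSum n j (by omega)]
  rw [Finset.sum_congr rfl h2, padeG]
  rw [← Finset.sum_subset (show range (n+1) ⊆ range (2*n+1) by
      intro x hx; simp only [mem_range] at *; omega)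
    (by intro x hx hx'
        simp only [mem_range] at hx hx'
        rw [if_neg (by omega), zero_mul])]
  apply Finset.sum_congr rfl
  intro j hj
  rw [mem_range] at hj
  rw [if_pos (by omega)]

lemma trem_tendsto (N : ℕ) :
    Tendsto (fun w : ℂ => (Complex.exp w - ∑ i ∈ range N, w^i / (i.factorial : ℂ)) / w^N)
      (nhdsWithin 0 {(0:ℂ)}ᶜ) (nhds (1 / (N.factorial : ℂ))) := by
  rw [tendsto_iff_norm_sub_tendsto_zero]
  set C : ℝ := (N+2 : ℝ) * (((N+1).factorial : ℝ) * (N+1))⁻¹ with hC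
  have hbound : ∀ᶠ w in nhdsWithin (0:ℂ) {(0:ℂ)}ᶜ,
      ‖(Complex.exp w - ∑ i ∈ range N, w^i / (i.factorial : ℂ)) / w^N - 1/(N.factorial : ℂ)‖
        ≤ ‖w‖ * C := by
    have h1 : ∀ᶠ w in nhdsWithin (0:ℂ) {(0:ℂ)}ᶜ, ‖w‖ ≤ 1 := by
      apply Filter.Eventually.filter_mono nhdsWithin_le_nhds
      have := Metric.closedBall_mem_nhds (0:ℂ) one_pos
      filter_upwards [this] with w hw
      simpa [Metric.mem_closedBall] using hw
    have h2 : ∀ᶠ w in nhdsWithin (0:ℂ) {(0:ℂ)}ᶜ, w ≠ 0 :=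
      eventually_mem_nhdsWithin.mono (by intro w hw; simpa using hw)
    filter_upwards [h1, h2] with w hw1 hw2
    have hwN : w^N ≠ 0 := pow_ne_zero _ hw2
    have hfac : (N.factorial : ℂ) ≠ 0 := Nat.cast_ne_zero.2 (Nat.factorial_ne_zero _)
    have heq : (Complex.exp w - ∑ i ∈ range N, w^i / (i.factorial : ℂ)) / w^N
        - 1/(N.factorial : ℂ)
        = (Complex.exp w - ∑ i ∈ range (N+1), w^i / (i.factorial : ℂ)) / w^N := by
      rw [Finset.sum_range_succ]
      field_simp
      ring
    rw [heq, norm_div, norm_pow]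
    have hb := Complex.exp_bound (x := w) hw1 (Nat.succ_pos N)
    have hwpos : (0:ℝ) < ‖w‖ := norm_pos_iff.2 hw2
    rw [div_le_iff₀ (by positivity)]
    calc ‖Complex.exp w - ∑ i ∈ range (N+1), w^i / (i.factorial : ℂ)‖
        ≤ ‖w‖^(N+1) * ((N+1+1 : ℝ) * (((N+1).factorial : ℝ) * (N+1))⁻¹) := by
          simpa [Nat.succ_eq_add_one] using hb
      _ = ‖w‖ * C * ‖w‖^N := by rw [hC]; push_cast; ring
  apply squeeze_zero' (by filter_upwards with w; positivity) hbound
  have : Tendsto (fun w : ℂ => ‖w‖ * C) (nhdsWithin (0:ℂ) {(0:ℂ)}ᶜ) (nhds (‖(0:ℂ)‖ * C)) := by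
    apply Tendsto.mul_const
    exact (continuous_norm.tendsto 0).mono_left nhdsWithin_le_nhds
  simpa using this

lemma ET_tendsto (n : ℕ) (hn : 1 ≤ n) :
    Tendsto (fun w : ℂ => (Complex.exp w * padeG n (-w) - padeG n w) / w^(2*n+1))
      (nhdsWithin 0 {(0:ℂ)}ᶜ)
      (nhds ((-1:ℂ)^n * (n.factorial : ℂ) / ((2*n+1).factorial : ℂ))) := by
  have hsum : Tendsto (fun w : ℂ => ∑ k ∈ range (n+1),
      ((2*n-k).factorial : ℂ) / (((n-k).factorial : ℂ) * (k.factorial : ℂ)) * (-1:ℂ)^k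
        * ((Complex.exp w - ∑ i ∈ range (2*n+1-k), w^i / (i.factorial : ℂ)) / w^(2*n+1-k)))
      (nhdsWithin 0 {(0:ℂ)}ᶜ)
      (nhds (∑ k ∈ range (n+1),
        ((2*n-k).factorial : ℂ) / (((n-k).factorial : ℂ) * (k.factorial : ℂ)) * (-1:ℂ)^k
          * (1 / ((2*n+1-k).factorial : ℂ)))) := by
    apply tendsto_finset_sum
    intro k hk
    exact (trem_tendsto (2*n+1-k)).const_mul _
  have hval : (∑ k ∈ range (n+1),
        ((2*n-k).factorial : ℂ) / (((n-k).factorial : ℂ) * (k.factorial : ℂ)) * (-1:ℂ)^k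
          * (1 / ((2*n+1-k).factorial : ℂ)))
      = (-1:ℂ)^n * (n.factorial : ℂ) / ((2*n+1).factorial : ℂ) := by
    rw [← Lval n hn]
    apply Finset.sum_congr rfl
    intro k _
    ring
  rw [hval] at hsum
  apply hsum.congr'
  have h2 : ∀ᶠ w in nhdsWithin (0:ℂ) {(0:ℂ)}ᶜ, w ≠ 0 :=
    eventually_mem_nhdsWithin.mono (by intro w hw; simpa using hw)
  filter_upwards [h2] with w hw
  rw [eq_div_iff (pow_ne_zero _ hw), Finset.sum_mul]
  have hterm : ∀ k ∈ range (n+1),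
      ((2*n-k).factorial : ℂ) / (((n-k).factorial : ℂ) * (k.factorial : ℂ)) * (-1:ℂ)^k
        * ((Complex.exp w - ∑ i ∈ range (2*n+1-k), w^i / (i.factorial : ℂ)) / w^(2*n+1-k))
        * w^(2*n+1)
      = ((2*n-k).factorial : ℂ) / (((n-k).factorial : ℂ) * (k.factorial : ℂ)) * (-1:ℂ)^k * w^k
          * Complex.exp w
        - ((2*n-k).factorial : ℂ) / (((n-k).factorial : ℂ) * (k.factorial : ℂ)) * (-1:ℂ)^k * w^k
          * (∑ i ∈ range (2*n+1-k), w^i / (i.factorial : ℂ)) := by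
    intro k hk
    rw [mem_range] at hk
    have hpow : w^(2*n+1) = w^(2*n+1-k) * w^k := by
      rw [← pow_add]; congr 1; omega
    rw [hpow]
    have hne : w^(2*n+1-k) ≠ 0 := pow_ne_zero _ hw
    have hf1 : ((n-k).factorial : ℂ) ≠ 0 := Nat.cast_ne_zero.2 (Nat.factorial_ne_zero _)
    have hf2 : (k.factorial : ℂ) ≠ 0 := Nat.cast_ne_zero.2 (Nat.factorial_ne_zero _)
    field_simp
  rw [Finset.sum_congr rfl hterm, Finset.sum_sub_distrib, Qeq n w, ← Finset.sum_mul,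
    mul_comm]
  congr 2
  rw [padeG]
  apply Finset.sum_congr rfl
  intro k _
  rw [neg_pow]
  ring

lemma keyalg (e a b gp gm z Z : ℂ) (hz : z ≠ 0) (hZ : Z ≠ 0) (hp : gp ≠ 0) (hm : gm ≠ 0)
    (he : e = 1 ∨ e = -1) :
    ((b - a) * I / 2 / z - -(1 / (2 * I * z) * (gm ^ 2 - gp ^ 2)) / (gp * gm)) / Z
      = e * (gp * ((a * gm - gp) / (e * I * (z * Z)))
          + gm * ((b * gp - gm) / (-(e * I * (z * Z))))) / (2 * (gp * gm)) := by
  have h2 : (I:ℂ)^2 = -1 := Complex.I_sq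
  have h3 : (I:ℂ)^3 = -I := by rw [pow_succ, h2]; ring
  have h4 : (I:ℂ)^4 = 1 := by rw [show (4:ℕ) = 2*2 from rfl, pow_mul, h2]; norm_num
  rcases he with rfl | rfl <;>
  · field_simp [hz, hZ, hp, hm, Complex.I_ne_zero]
    ring_nf
    simp only [h2, h3, h4]
    ring_nf

end SincPadeAux

set_option maxHeartbeats 2000000 in
/-- For `n ≥ 1`, the error `Ŝ_n(z) = sinc z - E_n(z)` satisfies
`lim_{z→0, z≠0} Ŝ_n(z)/z^{2n} = (n!)²/((2n)!(2n+1)!)`; in particular the error vanishes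
to order `2n` at `z = 0`. -/
theorem sincPade_error_limit (n : ℕ) (hn : 1 ≤ n) :
    Tendsto (fun z : ℂ => (csinc z - sincPadeE n z) / z ^ (2 * n))
      (nhdsWithin 0 {(0 : ℂ)}ᶜ)
      (nhds (((Nat.factorial n : ℂ)) ^ 2 /
        ((Nat.factorial (2 * n) : ℂ) * (Nat.factorial (2 * n + 1) : ℂ)))) := by
  set ET : ℂ → ℂ := fun w => (Complex.exp w * padeG n (-w) - padeG n w) / w^(2*n+1) with hET
  set L : ℂ := (-1:ℂ)^n * (n.factorial : ℂ) / ((2*n+1).factorial : ℂ) with hL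
  have hG0 : padeG n 0 = ((2*n).factorial : ℂ) / ((n.factorial : ℂ)) := by
    rw [padeG, Finset.sum_eq_single 0]
    · simp
    · intro k _ hk0; simp [zero_pow hk0]
    · simp
  have hfacne : ∀ m : ℕ, ((m.factorial : ℂ)) ≠ 0 :=
    fun m => Nat.cast_ne_zero.2 (Nat.factorial_ne_zero m)
  have hG0ne : padeG n 0 ≠ 0 := by
    rw [hG0]; exact div_ne_zero (hfacne _) (hfacne _)
  have hcont : Continuous (padeG n) := by
    apply continuous_finset_sum
    intro k _
    exact continuous_const.mul (continuous_pow k)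
  have hIz : Tendsto (fun z : ℂ => I * z) (nhdsWithin 0 {(0:ℂ)}ᶜ) (nhdsWithin 0 {(0:ℂ)}ᶜ) := by
    rw [tendsto_nhdsWithin_iff]
    constructor
    · have h := (continuous_mul_left I).tendsto 0
      simpa using h.mono_left nhdsWithin_le_nhds
    · filter_upwards [eventually_mem_nhdsWithin] with z hz
      simp only [Set.mem_compl_iff, Set.mem_singleton_iff] at *
      exact mul_ne_zero I_ne_zero hz
  have hmIz : Tendsto (fun z : ℂ => -(I * z)) (nhdsWithin 0 {(0:ℂ)}ᶜ) (nhdsWithin 0 {(0:ℂ)}ᶜ) := by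
    rw [tendsto_nhdsWithin_iff]
    constructor
    · have h := (continuous_mul_left (-I)).tendsto 0
      simp only [mul_zero] at h
      have h' := h.mono_left (nhdsWithin_le_nhds (s := {(0:ℂ)}ᶜ))
      simpa [neg_mul] using h'
    · filter_upwards [eventually_mem_nhdsWithin] with z hz
      simp only [Set.mem_compl_iff, Set.mem_singleton_iff] at *
      exact neg_ne_zero.2 (mul_ne_zero I_ne_zero hz)
  have hgp : Tendsto (fun z : ℂ => padeG n (I * z)) (nhdsWithin 0 {(0:ℂ)}ᶜ) (nhds (padeG n 0)) := by
    have := ((hcont.tendsto 0).mono_left nhdsWithin_le_nhds).comp hIz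
    exact this
  have hgm : Tendsto (fun z : ℂ => padeG n (-(I * z))) (nhdsWithin 0 {(0:ℂ)}ᶜ) (nhds (padeG n 0)) := by
    have := ((hcont.tendsto 0).mono_left nhdsWithin_le_nhds).comp hmIz
    exact this
  have hu : Tendsto (fun z : ℂ => ET (I * z)) (nhdsWithin 0 {(0:ℂ)}ᶜ) (nhds L) := by
    refine Tendsto.congr (fun z => ?_) ((ET_tendsto n hn).comp hIz)
    simp only [Function.comp_apply, hET]
  have hv : Tendsto (fun z : ℂ => ET (-(I * z))) (nhdsWithin 0 {(0:ℂ)}ᶜ) (nhds L) := by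
    refine Tendsto.congr (fun z => ?_) ((ET_tendsto n hn).comp hmIz)
    simp only [Function.comp_apply, hET]
  -- limit of the reorganized expression
  have hΦ : Tendsto (fun z : ℂ => (-1:ℂ)^n *
      (padeG n (I*z) * ET (I*z) + padeG n (-(I*z)) * ET (-(I*z)))
        / (2 * (padeG n (I*z) * padeG n (-(I*z)))))
      (nhdsWithin 0 {(0:ℂ)}ᶜ)
      (nhds ((-1:ℂ)^n * (padeG n 0 * L + padeG n 0 * L) / (2 * (padeG n 0 * padeG n 0)))) := by
    apply Tendsto.div
    · exact Tendsto.const_mul _ ((hgp.mul hu).add (hgm.mul hv))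
    · exact Tendsto.const_mul _ (hgp.mul hgm)
    · exact mul_ne_zero two_ne_zero (mul_ne_zero hG0ne hG0ne)
  have hvalue : (-1:ℂ)^n * (padeG n 0 * L + padeG n 0 * L) / (2 * (padeG n 0 * padeG n 0))
      = ((Nat.factorial n : ℂ)) ^ 2 /
        ((Nat.factorial (2 * n) : ℂ) * (Nat.factorial (2 * n + 1) : ℂ)) := by
    rw [hG0, hL]
    have hsq : ((-1:ℂ)^n) * ((-1:ℂ)^n) = 1 := by
      rw [← pow_add]
      exact Even.neg_one_pow ⟨n, rfl⟩
    rcases Nat.even_or_odd n with hpar | hpar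
    · rw [hpar.neg_one_pow]
      field_simp [hfacne n, hfacne (2*n), hfacne (2*n+1)]
      ring
    · rw [hpar.neg_one_pow]
      field_simp [hfacne n, hfacne (2*n), hfacne (2*n+1)]
      ring
  rw [← hvalue]
  apply hΦ.congr'
  have hevz : ∀ᶠ z in nhdsWithin (0:ℂ) {(0:ℂ)}ᶜ, z ≠ 0 :=
    eventually_mem_nhdsWithin.mono (by intro w hw; simpa using hw)
  filter_upwards [hevz, hgp.eventually_ne hG0ne, hgm.eventually_ne hG0ne] with z hz hp hm
  have hiz : (I*z)^(2*n+1) = (-1:ℂ)^n * I * (z * z^(2*n)) := by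
    rw [mul_pow, pow_succ I, pow_mul, I_sq, pow_succ z]
    ring
  have hmizpow : (-(I*z))^(2*n+1) = -((-1:ℂ)^n * I * (z * z^(2*n))) := by
    rw [(odd_two_mul_add_one n).neg_pow, hiz]
  have hsin : Complex.sin z = (Complex.exp (-(I*z)) - Complex.exp (I*z)) * I / 2 := by
    rw [Complex.sin, neg_mul, mul_comm z I]
  have hepm : (-1:ℂ)^n = 1 ∨ (-1:ℂ)^n = -1 := by
    rcases Nat.even_or_odd n with hpar | hpar
    · exact Or.inl hpar.neg_one_pow
    · exact Or.inr hpar.neg_one_pow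
  simp only [hET, csinc, if_neg hz, sincPadeE, neg_mul, neg_neg]
  rw [hsin, hiz, hmizpow]
  exact (keyalg ((-1:ℂ)^n) (Complex.exp (I*z)) (Complex.exp (-(I*z)))
    (padeG n (I*z)) (padeG n (-(I*z))) z (z^(2*n)) hz (pow_ne_zero _ hz) hp hm hepm).symm
end

section
/- For every real number x, (sinc x)² = (1/8) ∫_{-2}^{0} (2k + 4)(e^{-ikx} + e^{ikx}) dk, where the integral is over the real variable k. (This is the inversion of the Fourier transform of sinc² and underlies the exponential-sum approximation of sinc²(A)v.) -/
open Complex intervalIntegral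

/-- The unnormalized sinc function on the real line. -/
noncomputable def rsinc (x : ℝ) : ℝ := if x = 0 then 1 else Real.sin x / x

/-- For every real `x`,
`(sinc x)² = (1/8) ∫_{-2}^{0} (2k + 4)(e^{-ikx} + e^{ikx}) dk`: inversion of the Fourier
transform of `sinc²`, underlying the exponential-sum approximation of `sinc²(A)v`. -/
theorem rsinc_sq_eq_integral_exp (x : ℝ) :
    ((rsinc x : ℂ)) ^ 2 =
      (1 / 8) * ∫ k in (-2:ℝ)..0,
        (2 * (k:ℂ) + 4) * (Complex.exp (-Complex.I * k * x) + Complex.exp (Complex.I * k * x)) := by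
  have hcont : ∀ y : ℝ, Continuous fun k : ℝ =>
      (2 * (k:ℂ) + 4) * (Complex.exp (-Complex.I * k * y) + Complex.exp (Complex.I * k * y)) := by
    intro y; fun_prop
  rcases eq_or_ne x 0 with hx | hx
  · subst hx
    have hderiv : ∀ k ∈ Set.uIcc (-2:ℝ) 0, HasDerivAt (fun k : ℝ => (2*(k:ℂ)^2 + 8*k : ℂ))
        ((2 * (k:ℂ) + 4) * (Complex.exp (-Complex.I * k * ((0:ℝ):ℂ)) + Complex.exp (Complex.I * k * ((0:ℝ):ℂ)))) k := by
      intro k _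
      have h : HasDerivAt (fun z : ℂ => 2*z^2 + 8*z) (2*(2*(k:ℂ)) + 8) (k:ℂ) := by
        have := ((hasDerivAt_pow 2 ((k:ℂ))).const_mul 2).add ((hasDerivAt_id ((k:ℂ))).const_mul 8)
        exact this.congr_deriv (by norm_num)
      have := h.comp_ofReal
      convert this using 1
      push_cast
      simp [Complex.exp_zero]
      ring
    rw [integral_eq_sub_of_hasDerivAt hderiv ((hcont 0).intervalIntegrable _ _)]
    simp [rsinc]
    norm_num
  · obtain ⟨a, ha⟩ : ∃ a : ℂ, a = Complex.I * x := ⟨_, rfl⟩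
    have hx' : (x:ℂ) ≠ 0 := by exact_mod_cast hx
    have ha0 : a ≠ 0 := by simp [ha, hx', Complex.I_ne_zero]
    have hx2 : (x:ℂ)^2 = -a^2 := by
      rw [ha]; rw [mul_pow, Complex.I_sq]; ring
    set G : ℂ → ℂ := fun z =>
      ((2*z+4)/a + 2/(x:ℂ)^2) * Complex.exp (a*z) + ((2*z+4)/(-a) + 2/(x:ℂ)^2) * Complex.exp (-a*z)
      with hG
    have hderiv : ∀ k ∈ Set.uIcc (-2:ℝ) 0, HasDerivAt (fun k : ℝ => G k)
        ((2 * (k:ℂ) + 4) * (Complex.exp (-Complex.I * k * x) + Complex.exp (Complex.I * k * x))) k := by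
      intro k _
      have h1 : HasDerivAt (fun z : ℂ => (2*z+4)/a + 2/(x:ℂ)^2) (2/a) (k:ℂ) := by
        have := (((hasDerivAt_id ((k:ℂ))).const_mul 2).add_const 4).div_const a
        simpa using this.add_const (2/(x:ℂ)^2)
      have h2 : HasDerivAt (fun z : ℂ => Complex.exp (a*z)) (Complex.exp (a*(k:ℂ)) * a) (k:ℂ) := by
        simpa using ((hasDerivAt_id ((k:ℂ))).const_mul a).cexp
      have h3 : HasDerivAt (fun z : ℂ => (2*z+4)/(-a) + 2/(x:ℂ)^2) (2/(-a)) (k:ℂ) := by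
        have := (((hasDerivAt_id ((k:ℂ))).const_mul 2).add_const 4).div_const (-a)
        simpa using this.add_const (2/(x:ℂ)^2)
      have h4 : HasDerivAt (fun z : ℂ => Complex.exp (-a*z)) (Complex.exp (-a*(k:ℂ)) * (-a)) (k:ℂ) := by
        simpa using ((hasDerivAt_id ((k:ℂ))).const_mul (-a)).cexp
      have h : HasDerivAt G
          ((2/a) * Complex.exp (a*(k:ℂ)) + ((2*(k:ℂ)+4)/a + 2/(x:ℂ)^2) * (Complex.exp (a*(k:ℂ)) * a)
            + ((2/(-a)) * Complex.exp (-a*(k:ℂ)) + ((2*(k:ℂ)+4)/(-a) + 2/(x:ℂ)^2) * (Complex.exp (-a*(k:ℂ)) * (-a)))) (k:ℂ) :=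
        (h1.mul h2).add (h3.mul h4)
      have hd := h.comp_ofReal
      convert hd using 1
      have e1 : Complex.exp (-Complex.I * k * x) = Complex.exp (-a*(k:ℂ)) := by rw [ha]; ring_nf
      have e2 : Complex.exp (Complex.I * k * x) = Complex.exp (a*(k:ℂ)) := by rw [ha]; ring_nf
      rw [e1, e2, hx2]
      field_simp [ha0]
      ring
    rw [integral_eq_sub_of_hasDerivAt hderiv ((hcont x).intervalIntegrable _ _)]
    have hG0 : G 0 = 4/(x:ℂ)^2 := by
      simp only [hG, mul_zero, neg_mul, neg_zero, Complex.exp_zero]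
      rw [hx2, div_neg]
      field_simp [ha0]
      ring
    have hGm2 : G (-2) = (2/(x:ℂ)^2) * Complex.exp (-(2*a)) + (2/(x:ℂ)^2) * Complex.exp (2*a) := by
      simp only [hG]
      rw [show a * (-2:ℂ) = -(2*a) by ring, show -a * (-2:ℂ) = 2*a by ring]
      norm_num
    push_cast
    rw [hG0, hGm2]
    have key : 8 * Complex.sin x ^ 2 = 4 - 2 * Complex.exp (-(2*a)) - 2 * Complex.exp (2*a) := by
      rw [ha, show -(2*(Complex.I * (x:ℂ))) = ((-(2*x):ℝ):ℂ) * Complex.I by push_cast; ring,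
        show (2*(Complex.I * (x:ℂ))) = (((2*x):ℝ):ℂ) * Complex.I by push_cast; ring,
        Complex.exp_mul_I, Complex.exp_mul_I]
      push_cast
      rw [Complex.cos_neg, Complex.sin_neg, Complex.cos_two_mul, Complex.sin_two_mul]
      have h2 : Complex.sin x^2 + Complex.cos x^2 = 1 := Complex.sin_sq_add_cos_sq x
      linear_combination (8 : ℂ) * h2
    rw [rsinc, if_neg hx]
    push_cast
    field_simp
    linear_combination key
end

section
/- For every real number k, the improper integral lim_{R→∞} ∫_{-R}^{R} sinc(r) e^{irk} dr exists and equals (π/2)(sgn(1-k) + sgn(1+k)), where sgn denotes the sign function (sgn 0 = 0). Equivalently, the Fourier transform (with normalization (1/√(2π)) ∫ sinc(r) e^{irk} dr) of sinc equals (1/2)√(π/2)(sgn(1-k) + sgn(1+k)). -/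
open Complex Filter intervalIntegral Real

open MeasureTheory

noncomputable def gfun (t : ℝ) : ℝ := if t = 0 then 0 else t⁻¹ - (Real.sin t)⁻¹

lemma rsinc_zero : rsinc 0 = 1 := by simp [rsinc]

lemma rsinc_of_ne {x : ℝ} (hx : x ≠ 0) : rsinc x = Real.sin x / x := by simp [rsinc, hx]

lemma continuous_rsinc : Continuous rsinc := by
  rw [continuous_iff_continuousAt]
  intro x
  rcases eq_or_ne x 0 with rfl | hx
  · have h : Tendsto (fun y : ℝ => Real.sin y / y) (nhdsWithin 0 {(0:ℝ)}ᶜ) (nhds 1) := by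
      have := Real.hasDerivAt_sin 0
      rw [hasDerivAt_iff_tendsto_slope] at this
      simp only [Real.cos_zero] at this
      apply this.congr
      intro y
      simp [slope_def_field, div_eq_mul_inv]
    have key : Tendsto rsinc (nhdsWithin 0 {(0:ℝ)}ᶜ) (nhds 1) := by
      apply h.congr'
      filter_upwards [self_mem_nhdsWithin] with y hy
      exact (rsinc_of_ne hy).symm
    rw [ContinuousAt, rsinc_zero, ← nhdsNE_sup_pure, Filter.tendsto_sup]
    refine ⟨key, ?_⟩
    have : Tendsto rsinc (pure (0:ℝ)) (pure (rsinc 0)) := tendsto_pure_pure rsinc 0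
    rw [rsinc_zero] at this
    exact this.mono_right (pure_le_nhds 1)
  · have : rsinc =ᶠ[nhds x] fun y => Real.sin y / y := by
      filter_upwards [isOpen_compl_singleton.mem_nhds hx] with y hy
      exact rsinc_of_ne hy
    exact (Real.continuous_sin.continuousAt.div continuousAt_id hx).congr this.symm

lemma rsinc_neg (x : ℝ) : rsinc (-x) = rsinc x := by
  rcases eq_or_ne x 0 with rfl | hx
  · simp
  · rw [rsinc_of_ne (neg_ne_zero.2 hx), rsinc_of_ne hx, Real.sin_neg, neg_div_neg_eq]

noncomputable def Sint (R : ℝ) : ℝ := ∫ x in (0:ℝ)..R, rsinc x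

lemma Sint_neg (R : ℝ) : Sint (-R) = - Sint R := by
  have : (∫ x in (0:ℝ)..R, rsinc (-x)) = ∫ x in (-R)..(0:ℝ), rsinc x := by
    simpa using intervalIntegral.integral_comp_neg (a := (0:ℝ)) (b := R) rsinc
  simp only [rsinc_neg] at this
  rw [Sint, Sint, intervalIntegral.integral_symm, ← this]

lemma scaled_integral (a R : ℝ) : (∫ r in (0:ℝ)..R, a * rsinc (a * r)) = Sint (a * R) := by
  rcases eq_or_ne a 0 with rfl | ha
  · simp [Sint]
  · rw [intervalIntegral.integral_const_mul,
      intervalIntegral.integral_comp_mul_left rsinc ha]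
    simp only [mul_zero, smul_eq_mul, Sint]
    rw [← mul_assoc, mul_inv_cancel₀ ha, one_mul]

lemma parts (R : ℝ) (hR : 1 ≤ R) :
    Sint R = Sint 1 + ((1 - Real.cos R)/R - (1 - Real.cos 1))
      + ∫ x in (1:ℝ)..R, (1 - Real.cos x)/x^2 := by
  have hpos : ∀ x ∈ Set.uIcc (1:ℝ) R, (0:ℝ) < x := by
    intro x hx
    rcases Set.mem_uIcc.1 hx with h | h
    · linarith [h.1]
    · linarith [h.1, hR]
  have hu : ∀ x ∈ Set.uIcc (1:ℝ) R, HasDerivAt (fun y : ℝ => y⁻¹) (-((x:ℝ)^2)⁻¹) x := by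
    intro x hx
    simpa using hasDerivAt_inv (ne_of_gt (hpos x hx))
  have hv : ∀ x ∈ Set.uIcc (1:ℝ) R, HasDerivAt (fun y : ℝ => 1 - Real.cos y) (Real.sin x) x := by
    intro x _
    simpa using ((Real.hasDerivAt_cos x).const_sub 1)
  have hu' : IntervalIntegrable (fun x : ℝ => -((x:ℝ)^2)⁻¹) MeasureTheory.volume 1 R := by
    apply ContinuousOn.intervalIntegrable
    intro x hx
    exact ((continuousOn_id.pow 2).inv₀ (fun y hy => pow_ne_zero 2 (ne_of_gt (hpos y hy)))).neg x hx
  have hv' : IntervalIntegrable Real.sin MeasureTheory.volume 1 R :=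
    Real.continuous_sin.intervalIntegrable 1 R
  have key := intervalIntegral.integral_mul_deriv_eq_deriv_mul hu hv hu' hv'
  -- key : ∫ x in 1..R, x⁻¹ * sin x = R⁻¹*(1-cos R) - 1⁻¹*(1-cos 1) - ∫ x in 1..R, -(x^2)⁻¹*(1-cos x)
  have h1 : (∫ x in (1:ℝ)..R, x⁻¹ * Real.sin x) = ∫ x in (1:ℝ)..R, rsinc x := by
    apply intervalIntegral.integral_congr
    intro x hx
    rw [rsinc_of_ne (ne_of_gt (hpos x hx))]
    ring
  have h2 : (∫ x in (1:ℝ)..R, -((x:ℝ)^2)⁻¹ * (1 - Real.cos x))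
      = - ∫ x in (1:ℝ)..R, (1 - Real.cos x)/x^2 := by
    rw [← intervalIntegral.integral_neg]
    apply intervalIntegral.integral_congr
    intro x hx
    field_simp
  have h3 : Sint R = Sint 1 + ∫ x in (1:ℝ)..R, rsinc x := by
    rw [Sint, Sint, intervalIntegral.integral_add_adjacent_intervals]
    · exact continuous_rsinc.intervalIntegrable 0 1
    · exact continuous_rsinc.intervalIntegrable 1 R
  rw [h3, ← h1, key, h2]
  ring_nf

lemma integrable_tail : MeasureTheory.IntegrableOn (fun x : ℝ => (1 - Real.cos x)/x^2)
    (Set.Ioi (1:ℝ)) MeasureTheory.volume := by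
  have hmaj : MeasureTheory.IntegrableOn (fun x : ℝ => 2 * x ^ (-2 : ℝ))
      (Set.Ioi (1:ℝ)) MeasureTheory.volume :=
    (integrableOn_Ioi_rpow_of_lt (by norm_num) one_pos).const_mul 2
  apply MeasureTheory.Integrable.mono' hmaj
  · refine ContinuousOn.aestronglyMeasurable ?_ measurableSet_Ioi
    exact ((continuousOn_const.sub Real.continuous_cos.continuousOn).div
      (continuousOn_id.pow 2) (fun y hy => pow_ne_zero 2 (ne_of_gt (lt_trans one_pos hy))))
  · filter_upwards [MeasureTheory.ae_restrict_mem measurableSet_Ioi] with x hx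
    have hx1 : (1:ℝ) < x := hx
    have hx0 : (0:ℝ) < x := by linarith
    rw [Real.rpow_neg hx0.le, Real.norm_eq_abs, abs_div]
    rw [show (2:ℝ) = ((2:ℕ):ℝ) from by norm_num, Real.rpow_natCast]
    rw [abs_of_pos (by positivity : (0:ℝ) < x^2)]
    rw [div_le_iff₀ (by positivity), mul_assoc, inv_mul_cancel₀ (by positivity : (x:ℝ)^2 ≠ 0), mul_one]
    have := Real.neg_one_le_cos x
    have := Real.cos_le_one x
    rw [abs_le]
    constructor <;> · push_cast; linarith

lemma exists_tendsto_Sint : ∃ L, Tendsto Sint atTop (nhds L) := by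
  refine ⟨Sint 1 + (0 - (1 - Real.cos 1)) + ∫ x in Set.Ioi (1:ℝ), (1 - Real.cos x)/x^2, ?_⟩
  have h1 : Tendsto (fun R : ℝ => (1 - Real.cos R)/R) atTop (nhds 0) := by
    apply squeeze_zero_norm' ?_ (Filter.Tendsto.div_atTop (tendsto_const_nhds (x := (2:ℝ))) tendsto_id)
    filter_upwards [Filter.eventually_ge_atTop (1:ℝ)] with R hR
    simp only [id_eq]
    rw [Real.norm_eq_abs, abs_div, abs_of_pos (by linarith : (0:ℝ) < R)]
    apply div_le_div_of_nonneg_right ?_ (by linarith)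
    have := Real.neg_one_le_cos R
    rw [abs_le]; constructor <;> linarith [Real.cos_le_one R]
  have h2 : Tendsto (fun R : ℝ => ∫ x in (1:ℝ)..R, (1 - Real.cos x)/x^2) atTop
      (nhds (∫ x in Set.Ioi (1:ℝ), (1 - Real.cos x)/x^2)) :=
    MeasureTheory.intervalIntegral_tendsto_integral_Ioi 1 integrable_tail tendsto_id
  have := ((tendsto_const_nhds (x := Sint 1)).add ((h1.sub (tendsto_const_nhds (x := 1 - Real.cos 1))))).add h2
  apply this.congr'
  filter_upwards [Filter.eventually_ge_atTop (1:ℝ)] with R hR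
  exact (parts R hR).symm

lemma sin_odd_mul (n : ℕ) (t : ℝ) :
    Real.sin ((2*(n:ℝ)+1) * t)
      = Real.sin t * (1 + 2 * ∑ k ∈ Finset.range n, Real.cos (2*((k:ℝ)+1)*t)) := by
  induction n with
  | zero => simp
  | succ n ih =>
    have key := Real.sin_sub_sin ((2*((n:ℝ)+1)+1)*t) ((2*(n:ℝ)+1)*t)
    have e1 : ((2*((n:ℝ)+1)+1)*t - (2*(n:ℝ)+1)*t)/2 = t := by ring
    have e2 : ((2*((n:ℝ)+1)+1)*t + (2*(n:ℝ)+1)*t)/2 = 2*((n:ℝ)+1)*t := by ring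
    rw [e1, e2] at key
    have : Real.sin ((2*((n:ℝ)+1)+1)*t)
        = Real.sin ((2*(n:ℝ)+1)*t) + 2 * Real.sin t * Real.cos (2*((n:ℝ)+1)*t) := by
      linarith [key]
    push_cast
    push_cast at this ih
    rw [this, ih, Finset.sum_range_succ]
    push_cast
    ring

lemma measurable_gfun : Measurable gfun := by
  unfold gfun
  exact Measurable.ite (measurableSet_singleton 0) measurable_const
    (measurable_inv.sub Real.measurable_sin.inv)

lemma gfun_bound {t : ℝ} (ht : t ∈ Set.Icc (0:ℝ) (π/2)) : |gfun t| ≤ π^2/4 := by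
  have hpi := Real.pi_gt_three
  rcases eq_or_ne t 0 with rfl | h0
  · simp [gfun]; nlinarith
  have ht0 : 0 < t := lt_of_le_of_ne ht.1 (Ne.symm h0)
  have hs : 0 < Real.sin t :=
    Real.sin_pos_of_pos_of_lt_pi ht0 (lt_of_le_of_lt ht.2 (by linarith))
  have hsin_le : Real.sin t ≤ t := le_of_lt (Real.sin_lt ht0)
  have hjord : 2/π * t ≤ Real.sin t := Real.mul_le_sin ht0.le ht.2
  have heq : gfun t = -((t - Real.sin t)/(t * Real.sin t)) := by
    rw [gfun, if_neg h0]
    field_simp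
    ring
  have hden : 0 < t * Real.sin t := by positivity
  have hden2 : 2/π * t^2 ≤ t * Real.sin t := by nlinarith
  rw [heq, _root_.abs_neg, _root_.abs_of_nonneg (div_nonneg (by linarith) hden.le)]
  rcases le_or_gt t 1 with h1 | h1
  · have hc := Real.sin_gt_sub_cube ht0
    calc (t - Real.sin t)/(t * Real.sin t) ≤ (t^3/4)/(2/π * t^2) := by
          apply div_le_div₀ (by positivity) (by nlinarith) (by positivity) hden2
      _ = π * t / 8 := by field_simp; ring
      _ ≤ π^2/4 := by nlinarith
  · calc (t - Real.sin t)/(t * Real.sin t) ≤ t/(2/π * t^2) := by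
          apply div_le_div₀ (by positivity) (by nlinarith) (by positivity) hden2
      _ = π / (2*t) := by field_simp
      _ ≤ π^2/4 := by
          rw [div_le_div_iff₀ (by linarith) (by norm_num)]
          nlinarith

lemma key_ident (n : ℕ) : Set.EqOn
    (fun t => (2*(n:ℝ)+1) * rsinc ((2*(n:ℝ)+1) * t))
    (fun t => (1 + 2 * ∑ k ∈ Finset.range n, Real.cos (2*((k:ℝ)+1)*t))
      + Real.sin ((2*(n:ℝ)+1)*t) * gfun t)
    (Set.uIcc (0:ℝ) (π/2)) := by
  intro t ht
  rw [Set.uIcc_of_le (by positivity)] at ht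
  have hc : (0:ℝ) < 2*(n:ℝ)+1 := by positivity
  rcases eq_or_ne t 0 with rfl | h0
  · simp [rsinc_zero, gfun]
    ring
  have ht0 : 0 < t := lt_of_le_of_ne ht.1 (Ne.symm h0)
  have hs : 0 < Real.sin t :=
    Real.sin_pos_of_pos_of_lt_pi ht0 (lt_of_le_of_lt ht.2 (by linarith [Real.pi_gt_three]))
  have hct : (2*(n:ℝ)+1) * t ≠ 0 := by positivity
  simp only
  rw [rsinc_of_ne hct, gfun, if_neg h0, sin_odd_mul n t]
  field_simp
  ring_nf
  exact congrArg (fun s => Real.sin t + (Real.sin t * s) * 2) (Finset.sum_congr rfl fun x _ => by ring_nf)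

lemma cont_D (n : ℕ) : Continuous
    (fun t => (1 + 2 * ∑ k ∈ Finset.range n, Real.cos (2*((k:ℝ)+1)*t))) := by
  fun_prop

lemma int_D (n : ℕ) :
    (∫ t in (0:ℝ)..(π/2), (1 + 2 * ∑ k ∈ Finset.range n, Real.cos (2*((k:ℝ)+1)*t)))
      = π/2 := by
  have hcos : ∀ k : ℕ, (∫ t in (0:ℝ)..(π/2), Real.cos (2*((k:ℝ)+1)*t)) = 0 := by
    intro k
    have ha : (2*((k:ℝ)+1)) ≠ 0 := by positivity
    have h2 : 2*((k:ℝ)+1) * (π/2) = ((k+1 : ℕ) : ℝ) * π := by push_cast; ring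
    rw [intervalIntegral.integral_comp_mul_left Real.cos ha, mul_zero, integral_cos,
      Real.sin_zero, h2, Real.sin_nat_mul_pi]
    simp
  have hint : ∀ k ∈ Finset.range n, IntervalIntegrable
      (fun t => Real.cos (2*((k:ℝ)+1)*t)) MeasureTheory.volume 0 (π/2) := by
    intro k _
    exact Continuous.intervalIntegrable (by fun_prop) _ _
  rw [intervalIntegral.integral_add intervalIntegrable_const
      (Continuous.intervalIntegrable (by fun_prop) _ _),
    intervalIntegral.integral_const_mul, intervalIntegral.integral_finset_sum hint]
  simp only [hcos]
  simp

lemma intInt_sin_gfun (c : ℝ) : IntervalIntegrable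
    (fun t => Real.sin (c*t) * gfun t) MeasureTheory.volume 0 (π/2) := by
  have hM : Measurable fun t => Real.sin (c*t) * gfun t := by
    apply Measurable.mul ?_ measurable_gfun
    fun_prop
  rw [intervalIntegrable_iff, Set.uIoc_of_le (by positivity : (0:ℝ) ≤ π/2)]
  apply MeasureTheory.Measure.integrableOn_of_bounded measure_Ioc_lt_top.ne
    hM.aestronglyMeasurable
  filter_upwards [MeasureTheory.ae_restrict_mem measurableSet_Ioc] with t ht
  rw [Real.norm_eq_abs, _root_.abs_mul]
  calc |Real.sin (c*t)| * |gfun t| ≤ 1 * (π^2/4) :=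
        mul_le_mul (Real.abs_sin_le_one _)
          (gfun_bound ⟨ht.1.le, ht.2⟩) (abs_nonneg _) zero_le_one
    _ = π^2/4 := one_mul _

lemma Sint_odd_eq (n : ℕ) : Sint ((2*(n:ℝ)+1) * (π/2))
    = π/2 + ∫ t in (0:ℝ)..(π/2), Real.sin ((2*(n:ℝ)+1)*t) * gfun t := by
  rw [← scaled_integral, intervalIntegral.integral_congr (key_ident n),
    intervalIntegral.integral_add ((cont_D n).intervalIntegrable _ _) (intInt_sin_gfun _),
    int_D]

noncomputable def Gc : ℝ → ℂ := Set.indicator (Set.Ioc 0 (π/2)) (fun t => (gfun t : ℂ))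

lemma Gc_integrable : MeasureTheory.Integrable Gc := by
  rw [Gc, MeasureTheory.integrable_indicator_iff measurableSet_Ioc]
  apply MeasureTheory.Measure.integrableOn_of_bounded (M := π^2/4) measure_Ioc_lt_top.ne
    (Complex.measurable_ofReal.comp measurable_gfun).aestronglyMeasurable
  filter_upwards [MeasureTheory.ae_restrict_mem measurableSet_Ioc] with t ht
  simp only [Function.comp_apply]
  rw [Complex.norm_real, Real.norm_eq_abs]
  exact gfun_bound ⟨ht.1.le, ht.2⟩

noncomputable def hfun (lam : ℝ) : ℂ := ∫ v : ℝ, Complex.exp (((lam * v : ℝ) : ℂ) * Complex.I) * Gc v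

lemma fourier_side (lam : ℝ) : hfun lam = FourierTransform.fourier Gc (-(lam/(2*π))) := by
  rw [Real.fourier_real_eq_integral_exp_smul, hfun]
  congr 1
  funext v
  rw [smul_eq_mul]
  rw [show -2*π*v*(-(lam/(2*π))) = lam*v from by field_simp]

lemma hfun_comp_tendsto {u : ℝ → ℝ} (hu : Tendsto (fun x => -(u x/(2*π))) atTop (cocompact ℝ)) :
    Tendsto (fun lam => hfun (u lam)) atTop (nhds 0) := by
  have := (Real.zero_at_infty_fourier Gc).comp hu
  exact this.congr (fun lam => (fourier_side (u lam)).symm)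

lemma hfun_tendsto : Tendsto hfun atTop (nhds 0) := by
  apply hfun_comp_tendsto (u := id)
  rw [cocompact_eq_atBot_atTop]
  apply Tendsto.mono_right _ le_sup_left
  exact tendsto_neg_atTop_atBot.comp ((tendsto_id.atTop_div_const (by positivity)))

lemma hfun_neg_tendsto : Tendsto (fun lam => hfun (-lam)) atTop (nhds 0) := by
  apply hfun_comp_tendsto (u := fun x => -x)
  rw [cocompact_eq_atBot_atTop]
  apply Tendsto.mono_right _ le_sup_right
  have : (fun x : ℝ => -(-x/(2*π))) = fun x => x/(2*π) := by funext x; ring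
  rw [this]
  exact tendsto_id.atTop_div_const (by positivity)

lemma exp_integrable (lam : ℝ) :
    MeasureTheory.Integrable (fun v : ℝ => Complex.exp (((lam * v : ℝ) : ℂ) * Complex.I) * Gc v) := by
  apply Gc_integrable.bdd_mul
  · apply Continuous.aestronglyMeasurable
    fun_prop
  · exact Filter.Eventually.of_forall (fun v => (le_of_eq (Complex.norm_exp_ofReal_mul_I _) : _ ≤ (1:ℝ)))

lemma sin_complex_tendsto :
    Tendsto (fun lam : ℝ => ∫ v : ℝ, ((Real.sin (lam*v) : ℂ)) * Gc v) atTop (nhds 0) := by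
  have hdiff : ∀ lam : ℝ, hfun lam - hfun (-lam)
      = (2*Complex.I) * ∫ v : ℝ, ((Real.sin (lam*v) : ℂ)) * Gc v := by
    intro lam
    rw [hfun, hfun, ← MeasureTheory.integral_sub (exp_integrable lam) (exp_integrable (-lam)),
      ← MeasureTheory.integral_const_mul]
    congr 1
    funext v
    have e1 : ((-lam)*v : ℝ) = -(lam*v) := by ring
    rw [e1, ← sub_mul, Complex.ofReal_neg, Complex.exp_mul_I, Complex.exp_mul_I,
      Complex.cos_neg, Complex.sin_neg, ← Complex.ofReal_sin]
    ring
  have h2 : Tendsto (fun lam : ℝ => hfun lam - hfun (-lam)) atTop (nhds 0) := by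
    simpa using hfun_tendsto.sub hfun_neg_tendsto
  have h3 : Tendsto (fun lam : ℝ => (2*Complex.I)⁻¹ * (hfun lam - hfun (-lam))) atTop (nhds 0) := by
    simpa using h2.const_mul (2*Complex.I)⁻¹
  apply h3.congr
  intro lam
  rw [hdiff lam, ← mul_assoc, inv_mul_cancel₀ (by simp [Complex.ext_iff] : (2*Complex.I) ≠ 0), one_mul]

lemma complex_eq_real (lam : ℝ) : (∫ v : ℝ, ((Real.sin (lam*v) : ℂ)) * Gc v)
    = ((∫ t in (0:ℝ)..(π/2), Real.sin (lam*t) * gfun t : ℝ) : ℂ) := by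
  have heq : (fun v : ℝ => ((Real.sin (lam*v) : ℂ)) * Gc v)
      = Set.indicator (Set.Ioc 0 (π/2)) (fun v => ((Real.sin (lam*v) * gfun v : ℝ) : ℂ)) := by
    funext v
    by_cases hv : v ∈ Set.Ioc 0 (π/2)
    · rw [Set.indicator_of_mem hv, Gc, Set.indicator_of_mem hv]
      push_cast
      ring
    · rw [Set.indicator_of_notMem hv, Gc, Set.indicator_of_notMem hv, mul_zero]
  rw [heq, MeasureTheory.integral_indicator measurableSet_Ioc,
    intervalIntegral.integral_of_le (by positivity : (0:ℝ) ≤ π/2)]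
  exact _root_.integral_ofReal

lemma tendsto_sin_gfun :
    Tendsto (fun n : ℕ => ∫ t in (0:ℝ)..(π/2), Real.sin ((2*(n:ℝ)+1)*t) * gfun t)
      atTop (nhds 0) := by
  have hlam : Tendsto (fun n : ℕ => (2*(n:ℝ)+1)) atTop atTop := by
    apply tendsto_atTop_add_const_right
    exact (tendsto_natCast_atTop_atTop).const_mul_atTop two_pos
  have hc : Tendsto (fun n : ℕ =>
      ((∫ t in (0:ℝ)..(π/2), Real.sin ((2*(n:ℝ)+1)*t) * gfun t : ℝ) : ℂ)) atTop (nhds 0) := by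
    have := (sin_complex_tendsto.comp hlam)
    apply this.congr
    intro n
    exact complex_eq_real _
  have := (Complex.continuous_re.tendsto 0).comp hc
  simpa [Function.comp_def] using this

lemma tendsto_Sint : Tendsto Sint atTop (nhds (π/2)) := by
  obtain ⟨L, hL⟩ := exists_tendsto_Sint
  have hu : Tendsto (fun n : ℕ => (2*(n:ℝ)+1)*(π/2)) atTop atTop := by
    apply Filter.Tendsto.atTop_mul_const (by positivity)
    apply tendsto_atTop_add_const_right
    exact (tendsto_natCast_atTop_atTop).const_mul_atTop two_pos
  have h1 : Tendsto (fun n : ℕ => Sint ((2*(n:ℝ)+1)*(π/2))) atTop (nhds L) := hL.comp hu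
  have h2 : Tendsto (fun n : ℕ => Sint ((2*(n:ℝ)+1)*(π/2))) atTop (nhds (π/2)) := by
    have h := (tendsto_const_nhds (x := π/2) (f := atTop (α := ℕ))).add tendsto_sin_gfun
    rw [add_zero] at h
    exact h.congr (fun n => (Sint_odd_eq n).symm)
  rwa [tendsto_nhds_unique h1 h2] at hL

lemma tendsto_Sint_sign (a : ℝ) :
    Tendsto (fun R => Sint (a*R)) atTop (nhds (Real.sign a * (π/2))) := by
  rcases lt_trichotomy a 0 with h | h | h
  · have hpos : Tendsto (fun R : ℝ => (-a)*R) atTop atTop :=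
      Filter.Tendsto.const_mul_atTop (by linarith) tendsto_id
    have h2 := (tendsto_Sint.comp hpos).neg
    rw [Real.sign_of_neg h]
    have heq : (fun R : ℝ => Sint (a*R)) = fun R => -(Sint ((-a)*R)) := by
      funext R
      rw [show a*R = -((-a)*R) from by ring, Sint_neg]
    rw [heq]
    convert h2 using 2
    all_goals simp [Function.comp_def]
  · subst h
    simp only [zero_mul, Real.sign_zero]
    have : Sint 0 = 0 := intervalIntegral.integral_same
    simp [this]
  · have hpos : Tendsto (fun R : ℝ => a*R) atTop atTop :=
      Filter.Tendsto.const_mul_atTop h tendsto_id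
    have h2 := tendsto_Sint.comp hpos
    rw [Real.sign_of_pos h, one_mul]
    exact h2

/-- For every real `k`, the improper integral `lim_{R→∞} ∫_{-R}^{R} sinc(r) e^{irk} dr`
exists and equals `(π/2)(sgn(1-k) + sgn(1+k))`, where `sgn` is the sign function with
`sgn 0 = 0`.  (Fourier transform of the sinc function.) -/
theorem fourier_transform_rsinc (k : ℝ) :
    Tendsto (fun R : ℝ => ∫ r in (-R)..R, (rsinc r : ℂ) * Complex.exp (Complex.I * r * k))
      atTop
      (nhds ((Real.pi / 2 * (Real.sign (1 - k) + Real.sign (1 + k)) : ℝ) : ℂ)) := by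
  have hcc : Continuous fun r : ℝ => rsinc r * Real.cos (r*k) := by
    exact continuous_rsinc.mul (by fun_prop)
  have hcs : Continuous fun r : ℝ => rsinc r * Real.sin (r*k) := by
    exact continuous_rsinc.mul (by fun_prop)
  have hsplit : ∀ R : ℝ, (∫ r in (-R)..R, (rsinc r : ℂ) * Complex.exp (Complex.I * r * k))
      = ((∫ r in (-R)..R, rsinc r * Real.cos (r*k) : ℝ) : ℂ)
        + ((∫ r in (-R)..R, rsinc r * Real.sin (r*k) : ℝ) : ℂ) * Complex.I := by
    intro R
    have h1 : ∀ r : ℝ, (rsinc r : ℂ) * Complex.exp (Complex.I * r * k)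
        = ((rsinc r * Real.cos (r*k) : ℝ) : ℂ)
          + ((rsinc r * Real.sin (r*k) : ℝ) : ℂ) * Complex.I := by
      intro r
      rw [show Complex.I * (r:ℂ) * (k:ℂ) = ((r*k : ℝ) : ℂ) * Complex.I from by push_cast; ring,
        Complex.exp_mul_I, ← Complex.ofReal_cos, ← Complex.ofReal_sin]
      push_cast
      ring
    simp_rw [h1]
    have hi1 : IntervalIntegrable (fun r : ℝ => ((rsinc r * Real.cos (r*k) : ℝ) : ℂ))
        MeasureTheory.volume (-R) R := by
      apply Continuous.intervalIntegrable
      exact Complex.continuous_ofReal.comp hcc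
    have hi2 : IntervalIntegrable (fun r : ℝ => ((rsinc r * Real.sin (r*k) : ℝ) : ℂ) * Complex.I)
        MeasureTheory.volume (-R) R := by
      apply Continuous.intervalIntegrable
      exact (Complex.continuous_ofReal.comp hcs).mul continuous_const
    rw [intervalIntegral.integral_add hi1 hi2,
      intervalIntegral.integral_mul_const, intervalIntegral.integral_ofReal,
      intervalIntegral.integral_ofReal]
  have hodd : ∀ R : ℝ, (∫ r in (-R)..R, rsinc r * Real.sin (r*k)) = 0 := by
    intro R
    have heq : (∫ r in (-R)..(0:ℝ), rsinc r * Real.sin (r*k))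
        = - ∫ r in (0:ℝ)..R, rsinc r * Real.sin (r*k) := by
      have h2 := intervalIntegral.integral_comp_neg (a := (0:ℝ)) (b := R)
        (fun r => rsinc r * Real.sin (r*k))
      simp only [neg_zero] at h2
      rw [← h2, ← intervalIntegral.integral_neg]
      apply intervalIntegral.integral_congr
      intro r _
      simp only
      rw [rsinc_neg, show (-r)*k = -(r*k) from by ring, Real.sin_neg]
      ring
    rw [← intervalIntegral.integral_add_adjacent_intervals
        (hcs.intervalIntegrable (-R) 0) (hcs.intervalIntegrable 0 R), heq]
    ring
  have hident : ∀ r : ℝ, rsinc r * Real.cos (r*k)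
      = ((1+k) * rsinc ((1+k)*r) + (1-k) * rsinc ((1-k)*r))/2 := by
    have haux : ∀ (a r : ℝ), r ≠ 0 → a * rsinc (a*r) = Real.sin (a*r)/r := by
      intro a r hr
      rcases eq_or_ne a 0 with rfl | ha
      · simp
      · rw [rsinc_of_ne (mul_ne_zero ha hr)]
        field_simp
    intro r
    rcases eq_or_ne r 0 with rfl | hr
    · simp only [rsinc_zero, mul_zero, zero_mul, Real.cos_zero, mul_one, one_mul]
      ring
    · rw [haux _ _ hr, haux _ _ hr, rsinc_of_ne hr]
      have hsum : Real.sin ((1+k)*r) + Real.sin ((1-k)*r) = 2 * Real.sin r * Real.cos (r*k) := by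
        have hs := Real.sin_sub_sin ((1+k)*r) (-((1-k)*r))
        rw [Real.sin_neg, sub_neg_eq_add,
          show ((1+k)*r - -((1-k)*r))/2 = r from by ring,
          show ((1+k)*r + -((1-k)*r))/2 = r*k from by ring] at hs
        linarith
      field_simp
      rw [mul_comm r (1+k), mul_comm r (1-k), hsum]
      ring
  have heven : ∀ R : ℝ, (∫ r in (-R)..R, rsinc r * Real.cos (r*k))
      = Sint ((1+k)*R) + Sint ((1-k)*R) := by
    intro R
    have heq : (∫ r in (-R)..(0:ℝ), rsinc r * Real.cos (r*k))
        = ∫ r in (0:ℝ)..R, rsinc r * Real.cos (r*k) := by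
      have h2 := intervalIntegral.integral_comp_neg (a := (0:ℝ)) (b := R)
        (fun r => rsinc r * Real.cos (r*k))
      simp only [neg_zero] at h2
      rw [← h2]
      apply intervalIntegral.integral_congr
      intro r _
      simp only
      rw [rsinc_neg, show (-r)*k = -(r*k) from by ring, Real.cos_neg]
    have hhalf : (∫ r in (0:ℝ)..R, rsinc r * Real.cos (r*k))
        = (Sint ((1+k)*R) + Sint ((1-k)*R))/2 := by
      have hj1 : IntervalIntegrable (fun r : ℝ => (1+k) * rsinc ((1+k)*r))
          MeasureTheory.volume 0 R := by
        apply Continuous.intervalIntegrable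
        exact continuous_const.mul (continuous_rsinc.comp (continuous_const.mul continuous_id))
      have hj2 : IntervalIntegrable (fun r : ℝ => (1-k) * rsinc ((1-k)*r))
          MeasureTheory.volume 0 R := by
        apply Continuous.intervalIntegrable
        exact continuous_const.mul (continuous_rsinc.comp (continuous_const.mul continuous_id))
      simp_rw [hident]
      rw [intervalIntegral.integral_div, intervalIntegral.integral_add hj1 hj2,
        scaled_integral, scaled_integral]
    rw [← intervalIntegral.integral_add_adjacent_intervals
        (hcc.intervalIntegrable (-R) 0) (hcc.intervalIntegrable 0 R), heq, hhalf]
    ring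
  have hlim : Tendsto (fun R : ℝ => Sint ((1+k)*R) + Sint ((1-k)*R)) atTop
      (nhds (Real.pi / 2 * (Real.sign (1 - k) + Real.sign (1 + k)))) := by
    have := (tendsto_Sint_sign (1+k)).add (tendsto_Sint_sign (1-k))
    convert this using 2
    ring
  have final := (Complex.continuous_ofReal.tendsto _).comp hlim
  apply final.congr
  intro R
  rw [Function.comp_apply, hsplit R, hodd R, heven R]
  push_cast
  ring
end
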